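/- arXiv:1907.06456 — 8 statements merged into one kernel-verified Lean document; each statement's English description precedes it below -/
import Mathlib

section
/- Let q = p^e be a prime power, F a field containing 𝔽_q, and σ : F((z)) → F((z)) the ring endomorphism of the field of formal Laurent series that fixes z and raises each coefficient to the q-th power. A matrix h ∈ GL₂(F((z))) satisfies h·diag(z,1) = diag(z,1)·σ(h) if and only if h is a diagonal matrix both of whose diagonal entries are invertible Laurent series fixed by σ (equivalently, invertible Laurent series all of whose coefficients lie in the image of 𝔽_q in F). -/
lemma zcoeff {F : Type*} [Field F] (f : LaurentSeries F) (n : ℤ) :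
    ((HahnSeries.single (1:ℤ) (1:F) : LaurentSeries F) * f).coeff n = f.coeff (n-1) := by
  have hn : n = (n - 1) + 1 := by ring
  conv_lhs => rw [hn, HahnSeries.coeff_single_mul_add, one_mul]

lemma aux1 {F : Type*} [Field F] {q : ℕ} (hq : q ≠ 0) (f : LaurentSeries F)
    (h : ∀ n : ℤ, f.coeff n = f.coeff (n - 1) ^ q) : f = 0 := by
  by_contra hf
  have h1 := HahnSeries.coeff_order_eq_zero.not.mpr hf
  have h2 : f.coeff (f.order - 1) = 0 :=
    HahnSeries.coeff_eq_zero_of_lt_order (by omega)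
  rw [h f.order, h2, zero_pow hq] at h1
  exact h1 rfl

lemma aux2 {F : Type*} [Field F] {q : ℕ} (hq : q ≠ 0) (f : LaurentSeries F)
    (h : ∀ n : ℤ, f.coeff n ^ q = f.coeff (n - 1)) : f = 0 := by
  by_contra hf
  have h1 := HahnSeries.coeff_order_eq_zero.not.mpr hf
  have h2 : f.coeff (f.order - 1) = 0 :=
    HahnSeries.coeff_eq_zero_of_lt_order (by omega)
  rw [← h f.order] at h2
  exact h1 (pow_eq_zero_iff hq |>.mp h2)

/-- For `q = p^e` a prime power, `F` a field containing `𝔽_q`, and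
`σ : F((z)) → F((z))` the ring endomorphism fixing `z` and raising each coefficient to the
`q`-th power, a matrix `h ∈ GL₂(F((z)))` satisfies `h·diag(z,1) = diag(z,1)·σ(h)` iff `h` is
diagonal with both diagonal entries invertible Laurent series fixed by `σ`. -/
theorem stmt_0 {p e q : ℕ} [Fact p.Prime] (hq : q = p ^ e) (he : 0 < e)
    {F : Type*} [Field F] [Algebra (GaloisField p e) F]
    (σ : LaurentSeries F →+* LaurentSeries F)
    (hσ : ∀ (f : LaurentSeries F) (n : ℤ), (σ f).coeff n = f.coeff n ^ q)
    (h : (Matrix (Fin 2) (Fin 2) (LaurentSeries F))ˣ) :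
    (↑h : Matrix (Fin 2) (Fin 2) (LaurentSeries F)) *
        Matrix.diagonal ![(HahnSeries.single (1 : ℤ) (1 : F) : LaurentSeries F), 1] =
      Matrix.diagonal ![(HahnSeries.single (1 : ℤ) (1 : F) : LaurentSeries F), 1] *
        ((↑h : Matrix (Fin 2) (Fin 2) (LaurentSeries F)).map ⇑σ) ↔
      ((∀ i j : Fin 2, i ≠ j → (↑h : Matrix (Fin 2) (Fin 2) (LaurentSeries F)) i j = 0) ∧
        ∀ i : Fin 2, IsUnit ((↑h : Matrix (Fin 2) (Fin 2) (LaurentSeries F)) i i) ∧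
          σ ((↑h : Matrix (Fin 2) (Fin 2) (LaurentSeries F)) i i) =
            (↑h : Matrix (Fin 2) (Fin 2) (LaurentSeries F)) i i) := by
  have hq0 : q ≠ 0 := by
    subst hq; exact pow_ne_zero _ (Fact.out (p := p.Prime)).ne_zero
  set M : Matrix (Fin 2) (Fin 2) (LaurentSeries F) := (↑h : Matrix (Fin 2) (Fin 2) (LaurentSeries F)) with hM
  set z : LaurentSeries F := HahnSeries.single (1:ℤ) (1:F) with hz
  have hzne : z ≠ 0 := HahnSeries.single_ne_zero one_ne_zero
  constructor
  · intro heq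
    have key : ∀ i j, M i j * (![z, 1] j) = (![z, 1] i) * σ (M i j) := by
      intro i j
      have := congrFun (congrFun heq i) j
      simpa [Matrix.mul_diagonal, Matrix.diagonal_mul, Matrix.map_apply] using this
    have h01 : M 0 1 = 0 := by
      have k := key 0 1
      simp only [Matrix.cons_val_one, Matrix.head_cons, Matrix.cons_val_zero, mul_one] at k
      refine aux1 hq0 _ (fun n => ?_)
      conv_lhs => rw [k, zcoeff, hσ]
    have h10 : M 1 0 = 0 := by
      have k := key 1 0
      simp only [Matrix.cons_val_one, Matrix.head_cons, Matrix.cons_val_zero, one_mul] at k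
      refine aux2 hq0 _ (fun n => ?_)
      rw [← hσ, ← k, mul_comm, zcoeff]
    have h00 : σ (M 0 0) = M 0 0 := by
      have k := key 0 0
      simp only [Matrix.cons_val_zero] at k
      rw [mul_comm] at k
      exact mul_left_cancel₀ hzne k.symm
    have h11 : σ (M 1 1) = M 1 1 := by
      have k := key 1 1
      simpa [Matrix.cons_val_one, Matrix.head_cons] using k.symm
    have hdet : IsUnit (M 0 0 * M 1 1) := by
      have := (Matrix.isUnit_iff_isUnit_det M).mp h.isUnit
      rwa [Matrix.det_fin_two, h01, h10, mul_zero, sub_zero] at this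
    refine ⟨?_, ?_⟩
    · intro i j hij
      fin_cases i <;> fin_cases j <;> simp [h01, h10] at hij ⊢
    · intro i
      fin_cases i
      · exact ⟨isUnit_of_mul_isUnit_left hdet, h00⟩
      · exact ⟨isUnit_of_mul_isUnit_right hdet, h11⟩
  · rintro ⟨hd, hfix⟩
    have h01 : M 0 1 = 0 := hd 0 1 (by decide)
    have h10 : M 1 0 = 0 := hd 1 0 (by decide)
    ext i j
    fin_cases i <;> fin_cases j <;>
      simp [Matrix.mul_diagonal, Matrix.diagonal_mul, Matrix.map_apply, h01, h10,
        (hfix 0).2, (hfix 1).2, mul_comm]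
end

section
/- Let q = p^e be a prime power and A an integral domain containing 𝔽_q. Suppose g ∈ GL₂(A((z))) satisfies: (i) all entries of g⁻¹·diag(z,1)·σ(g) lie in A[[z]]; and (ii) det(g⁻¹·diag(z,1)·σ(g)) = z·u for some unit u of A[[z]]. Then there exist integers m, n such that diag(z^{-m}, z^{-n})·g ∈ GL₂(A[[z]]). -/
open HahnSeries

namespace Stmt1Aux

variable {A : Type*} [CommRing A]

lemma mul_coeff_bdd (f h : LaurentSeries A) (a b c : ℤ) (hc : a + b = c)
    (hf : ∀ x, x < a → f.coeff x = 0) (hh : ∀ y, y < b → h.coeff y = 0) :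
    (f * h).coeff c = f.coeff a * h.coeff b := by
  subst hc
  rw [HahnSeries.coeff_mul]
  apply Finset.sum_eq_single (a, b)
  · rintro ⟨i, j⟩ hmem hne
    rw [Finset.mem_addAntidiagonal] at hmem
    obtain ⟨hi, hj, hij⟩ := hmem
    exfalso
    apply hne
    have hia : a ≤ i := not_lt.mp fun hl => hi (hf i hl)
    have hjb : b ≤ j := not_lt.mp fun hl => hj (hh j hl)
    have h1 : i = a := by omega
    have h2 : j = b := by omega
    rw [h1, h2]
  · intro hnot
    rw [Finset.mem_addAntidiagonal] at hnot
    push_neg at hnot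
    by_cases hfa : f.coeff a = 0
    · rw [hfa, zero_mul]
    by_cases hhb : h.coeff b = 0
    · rw [hhb, mul_zero]
    exact absurd rfl (hnot (Function.mem_support.mpr hfa) (Function.mem_support.mpr hhb))

lemma coeff_ofPowerSeries_neg (F : PowerSeries A) (n : ℤ) (hn : n < 0) :
    (HahnSeries.ofPowerSeries ℤ A F).coeff n = 0 := by
  rw [HahnSeries.ofPowerSeries_apply]
  apply HahnSeries.embDomain_notin_range
  rintro ⟨k, hk⟩
  have hk' : (k : ℤ) = n := hk
  omega

lemma exists_powerSeries (f : LaurentSeries A) (h : ∀ n : ℤ, n < 0 → f.coeff n = 0) :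
    ∃ F : PowerSeries A, HahnSeries.ofPowerSeries ℤ A F = f ∧
      ∀ n : ℕ, PowerSeries.coeff n F = f.coeff (n : ℤ) := by
  refine ⟨PowerSeries.mk (fun n => f.coeff (n : ℤ)), ?_, fun n => by simp⟩
  ext n
  rcases le_or_gt 0 n with hn | hn
  · lift n to ℕ using hn
    rw [HahnSeries.ofPowerSeries_apply_coeff]
    simp
  · rw [h n hn]
    exact coeff_ofPowerSeries_neg _ n hn

lemma single_neg_mul_coeff (a : ℤ) (f : LaurentSeries A) (n : ℤ) :
    ((HahnSeries.single (-a) (1 : A) : LaurentSeries A) * f).coeff n = f.coeff (n + a) := by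
  have h := HahnSeries.coeff_single_mul_add (r := (1 : A)) (x := f) (a := n + a) (b := -a)
  rw [one_mul] at h
  rw [← h]
  congr 1
  ring

lemma isUnit_single (a : ℤ) : IsUnit (HahnSeries.single a (1 : A) : LaurentSeries A) := by
  apply IsUnit.of_mul_eq_one (HahnSeries.single (-a) (1 : A))
  rw [HahnSeries.single_mul_single, mul_one, add_neg_cancel, HahnSeries.single_zero_one]

lemma isUnit_of_ofPowerSeries [IsDomain A] (F : PowerSeries A)
    (hu : IsUnit (HahnSeries.ofPowerSeries ℤ A F))
    (hc : (HahnSeries.ofPowerSeries ℤ A F).coeff 0 ≠ 0) : IsUnit F := by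
  obtain ⟨u, hu⟩ := hu
  set f : LaurentSeries A := HahnSeries.ofPowerSeries ℤ A F with hf
  have hfu : f * ↑u⁻¹ = 1 := by rw [← hu]; exact u.mul_inv
  have hfne : f ≠ 0 := HahnSeries.ne_zero_of_coeff_ne_zero hc
  have h2 : ¬ f.order < 0 := fun hlt =>
    hfne (HahnSeries.coeff_order_eq_zero.mp (coeff_ofPowerSeries_neg F _ hlt))
  have hford : f.order = 0 :=
    le_antisymm (HahnSeries.order_le_of_coeff_ne_zero hc) (not_lt.mp h2)
  have hvne : (↑u⁻¹ : LaurentSeries A) ≠ 0 := right_ne_zero_of_mul_eq_one hfu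
  have hvord : (↑u⁻¹ : LaurentSeries A).order = 0 := by
    have h3 := HahnSeries.order_mul hfne hvne
    rw [hfu, HahnSeries.order_one, hford, zero_add] at h3
    omega
  obtain ⟨V, hV, -⟩ := exists_powerSeries (↑u⁻¹ : LaurentSeries A)
    (fun n hn => HahnSeries.coeff_eq_zero_of_lt_order (by rw [hvord]; exact hn))
  refine IsUnit.of_mul_eq_one (a := F) V ?_
  apply HahnSeries.ofPowerSeries_injective (Γ := ℤ)
  rw [map_mul, hV, map_one, ← hf, hfu]

end Stmt1Aux

/-- For `q = p^e` a prime power and `A` an integral domain containing `𝔽_q`,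
if `g ∈ GL₂(A((z)))` is such that `g⁻¹·diag(z,1)·σ(g)` has all entries in `A[[z]]` and
determinant `z·u` with `u ∈ A[[z]]ˣ`, then there are integers `m, n` with
`diag(z^{-m}, z^{-n})·g ∈ GL₂(A[[z]])`. -/
theorem stmt_1 {p e q : ℕ} [Fact p.Prime] (hq : q = p ^ e) (he : 0 < e)
    {A : Type*} [CommRing A] [IsDomain A] [Algebra (GaloisField p e) A]
    (σ : LaurentSeries A →+* LaurentSeries A)
    (hσ : ∀ (f : LaurentSeries A) (n : ℤ), (σ f).coeff n = f.coeff n ^ q)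
    (g : (Matrix (Fin 2) (Fin 2) (LaurentSeries A))ˣ)
    (τ : Matrix (Fin 2) (Fin 2) (LaurentSeries A))
    (hτ : τ = (↑g⁻¹ : Matrix (Fin 2) (Fin 2) (LaurentSeries A)) *
        Matrix.diagonal ![(HahnSeries.single (1 : ℤ) (1 : A) : LaurentSeries A), 1] *
        ((↑g : Matrix (Fin 2) (Fin 2) (LaurentSeries A)).map ⇑σ))
    (hint : ∀ (i j : Fin 2) (n : ℤ), n < 0 → (τ i j).coeff n = 0)
    (hdet : ∃ u : (PowerSeries A)ˣ,
      τ.det = (HahnSeries.single (1 : ℤ) (1 : A) : LaurentSeries A) *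
        HahnSeries.ofPowerSeries ℤ A ↑u) :
    ∃ m n : ℤ, ∃ G : (Matrix (Fin 2) (Fin 2) (PowerSeries A))ˣ,
      Matrix.diagonal ![(HahnSeries.single (-m) (1 : A) : LaurentSeries A),
          (HahnSeries.single (-n) (1 : A) : LaurentSeries A)] *
          (↑g : Matrix (Fin 2) (Fin 2) (LaurentSeries A)) =
        (↑G : Matrix (Fin 2) (Fin 2) (PowerSeries A)).map ⇑(HahnSeries.ofPowerSeries ℤ A) := by
  classical
  open Stmt1Aux in
  have hq0 : q ≠ 0 := by
    have hp : p ≠ 0 := (Fact.out (p := p.Prime)).ne_zero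
    rw [hq]; exact pow_ne_zero e hp
  set M : Matrix (Fin 2) (Fin 2) (LaurentSeries A) := (↑g : Matrix (Fin 2) (Fin 2) (LaurentSeries A)) with hM
  -- the key relation g * τ = diag(z,1) * σ(g)
  have key : M * τ =
      Matrix.diagonal ![(HahnSeries.single (1 : ℤ) (1 : A) : LaurentSeries A), 1] * (M.map ⇑σ) := by
    have h1 : M * (↑g⁻¹ : Matrix (Fin 2) (Fin 2) (LaurentSeries A)) = 1 := g.mul_inv
    rw [hτ, ← Matrix.mul_assoc, ← Matrix.mul_assoc, h1, Matrix.one_mul]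
  -- determinant of g is a unit, hence nonzero
  have h01 : ∀ i : Fin 2, i = 0 ∨ i = 1 := by decide
  have hdetg : IsUnit M.det := (Matrix.isUnit_iff_isUnit_det M).mp g.isUnit
  have hdetne : M.det ≠ 0 := hdetg.ne_zero
  -- rows of g are nonzero
  have hrow : ∀ i : Fin 2, ∃ j, M i j ≠ 0 := by
    intro i
    by_contra hcon
    push_neg at hcon
    apply hdetne
    rw [Matrix.det_fin_two]
    rcases h01 i with rfl | rfl <;> rw [hcon 0, hcon 1] <;> ring
  -- the minimal order of each row
  have hWF : ∀ i : Fin 2, ((M i 0).support ∪ (M i 1).support).IsWF :=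
    fun i => ((M i 0).isWF_support).union ((M i 1).isWF_support)
  have hne : ∀ i : Fin 2, ((M i 0).support ∪ (M i 1).support).Nonempty := by
    intro i
    obtain ⟨j, hj⟩ := hrow i
    obtain ⟨x, hx⟩ := HahnSeries.support_nonempty_iff.mpr hj
    rcases h01 j with rfl | rfl
    · exact ⟨x, Set.mem_union_left _ hx⟩
    · exact ⟨x, Set.mem_union_right _ hx⟩
  set m : Fin 2 → ℤ := fun i => (hWF i).min (hne i) with hm
  have hm_low : ∀ (i j : Fin 2) (x : ℤ), x < m i → (M i j).coeff x = 0 := by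
    intro i j x hx
    by_contra hc
    have hmem : x ∈ (M i 0).support ∪ (M i 1).support := by
      rcases h01 j with rfl | rfl
      · exact Set.mem_union_left _ (Function.mem_support.mpr hc)
      · exact Set.mem_union_right _ (Function.mem_support.mpr hc)
    exact (hWF i).not_lt_min (hne i) hmem hx
  have hm_mem : ∀ i : Fin 2, ∃ j, (M i j).coeff (m i) ≠ 0 := by
    intro i
    have h := (hWF i).min_mem (hne i)
    rcases h with h | h
    · exact ⟨0, Function.mem_support.mp h⟩
    · exact ⟨1, Function.mem_support.mp h⟩
  set c : Fin 2 → Fin 2 → A := fun i j => (M i j).coeff (m i) with hc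
  set t : Fin 2 → Fin 2 → A := fun k j => (τ k j).coeff 0 with ht
  -- coefficient relations
  have E0 : ∀ j : Fin 2, c 0 0 * t 0 j + c 0 1 * t 1 j = 0 := by
    intro j
    have h := congrFun (congrFun key 0) j
    rw [Matrix.mul_apply, Fin.sum_univ_two, Matrix.diagonal_mul, Matrix.map_apply] at h
    have h' := congrArg (fun x : LaurentSeries A => x.coeff (m 0)) h
    simp only [HahnSeries.coeff_add] at h'
    rw [mul_coeff_bdd _ _ (m 0) 0 _ (add_zero _) (hm_low 0 0) (fun y hy => hint 0 j y hy),
      mul_coeff_bdd _ _ (m 0) 0 _ (add_zero _) (hm_low 0 1) (fun y hy => hint 1 j y hy)] at h'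
    have hR : ((![(HahnSeries.single (1 : ℤ) (1 : A) : LaurentSeries A), 1] 0) *
        σ (M 0 j)).coeff (m 0) = 0 := by
      rw [Matrix.cons_val_zero]
      have h2 := HahnSeries.coeff_single_mul_add (r := (1 : A)) (x := σ (M 0 j))
        (a := m 0 - 1) (b := 1)
      rw [sub_add_cancel, one_mul] at h2
      rw [h2, hσ, hm_low 0 j _ (by omega), zero_pow hq0]
    rw [hR] at h'
    exact h'
  have E1 : ∀ j : Fin 2, c 1 0 * t 0 j + c 1 1 * t 1 j = c 1 j ^ q := by
    intro j
    have h := congrFun (congrFun key 1) j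
    rw [Matrix.mul_apply, Fin.sum_univ_two, Matrix.diagonal_mul, Matrix.map_apply] at h
    have h' := congrArg (fun x : LaurentSeries A => x.coeff (m 1)) h
    simp only [HahnSeries.coeff_add] at h'
    rw [mul_coeff_bdd _ _ (m 1) 0 _ (add_zero _) (hm_low 1 0) (fun y hy => hint 0 j y hy),
      mul_coeff_bdd _ _ (m 1) 0 _ (add_zero _) (hm_low 1 1) (fun y hy => hint 1 j y hy)] at h'
    have hR : ((![(HahnSeries.single (1 : ℤ) (1 : A) : LaurentSeries A), 1] 1) *
        σ (M 1 j)).coeff (m 1) = c 1 j ^ q := by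
      rw [Matrix.cons_val_one, Matrix.cons_val_zero, one_mul, hσ]
    rw [hR] at h'
    exact h'
  -- the leading coefficient matrix has nonzero determinant
  have hdetc : c 0 0 * c 1 1 - c 0 1 * c 1 0 ≠ 0 := by
    intro hdc
    obtain ⟨j1, hj1⟩ := hm_mem 1
    apply hj1
    have hz : ∀ j : Fin 2, c 1 j = 0 := by
      intro j
      obtain ⟨j0, hj0⟩ := hm_mem 0
      have hkey : c 0 j0 * (c 1 j ^ q) = 0 := by
        rcases h01 j0 with rfl | rfl
        · calc c 0 0 * c 1 j ^ q = c 0 0 * (c 1 0 * t 0 j + c 1 1 * t 1 j) := by rw [E1 j]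
            _ = c 1 0 * (c 0 0 * t 0 j + c 0 1 * t 1 j) := by linear_combination (t 1 j) * hdc
            _ = 0 := by rw [E0 j, mul_zero]
        · calc c 0 1 * c 1 j ^ q = c 0 1 * (c 1 0 * t 0 j + c 1 1 * t 1 j) := by rw [E1 j]
            _ = c 1 1 * (c 0 0 * t 0 j + c 0 1 * t 1 j) := by linear_combination (-(t 0 j)) * hdc
            _ = 0 := by rw [E0 j, mul_zero]
      rcases mul_eq_zero.mp hkey with h | h
      · exact absurd h hj0
      · exact pow_eq_zero_iff hq0 |>.mp h
    exact hz j1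
  -- build the power series matrix
  have hP : ∀ i j : Fin 2, ∃ F : PowerSeries A,
      HahnSeries.ofPowerSeries ℤ A F =
        (HahnSeries.single (-(m i)) (1 : A) : LaurentSeries A) * M i j ∧
      ∀ n : ℕ, PowerSeries.coeff n F =
        ((HahnSeries.single (-(m i)) (1 : A) : LaurentSeries A) * M i j).coeff (n : ℤ) := by
    intro i j
    apply exists_powerSeries
    intro n hn
    rw [single_neg_mul_coeff]
    exact hm_low i j _ (by omega)
  choose P hP1 hP2 using hP
  set Pm : Matrix (Fin 2) (Fin 2) (PowerSeries A) := Matrix.of (fun i j => P i j) with hPm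
  -- the main matrix equation
  have Emain : Matrix.diagonal ![(HahnSeries.single (-(m 0)) (1 : A) : LaurentSeries A),
      (HahnSeries.single (-(m 1)) (1 : A) : LaurentSeries A)] * M =
      Pm.map ⇑(HahnSeries.ofPowerSeries ℤ A) := by
    refine Matrix.ext fun i j => ?_
    rw [Matrix.diagonal_mul, Matrix.map_apply]
    have hcur : Pm i j = P i j := rfl
    rw [hcur, hP1 i j]
    congr 1
    rcases h01 i with rfl | rfl
    · rw [Matrix.cons_val_zero]
    · rw [Matrix.cons_val_one, Matrix.cons_val_zero]
  -- determinant of Pm is a unit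
  have hdetLau : IsUnit (Matrix.det (Pm.map ⇑(HahnSeries.ofPowerSeries ℤ A))) := by
    rw [← Emain, Matrix.det_mul, Matrix.det_diagonal, Fin.prod_univ_two]
    rw [Matrix.cons_val_zero, Matrix.cons_val_one, Matrix.cons_val_zero]
    exact ((isUnit_single _).mul (isUnit_single _)).mul hdetg
  have hdetP_Lau : HahnSeries.ofPowerSeries ℤ A Pm.det =
      (Pm.map ⇑(HahnSeries.ofPowerSeries ℤ A)).det := RingHom.map_det _ _
  have hcc : ∀ i j : Fin 2, PowerSeries.constantCoeff (Pm i j) = c i j := by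
    intro i j
    have h := hP2 i j 0
    rw [single_neg_mul_coeff] at h
    have h2 : ((0 : ℕ) : ℤ) + m i = m i := by omega
    rw [h2, PowerSeries.coeff_zero_eq_constantCoeff] at h
    exact h
  have hc0 : (HahnSeries.ofPowerSeries ℤ A Pm.det).coeff 0 ≠ 0 := by
    have h : (HahnSeries.ofPowerSeries ℤ A Pm.det).coeff ((0 : ℕ) : ℤ) =
        PowerSeries.coeff 0 Pm.det := HahnSeries.ofPowerSeries_apply_coeff _ 0
    rw [show ((0 : ℕ) : ℤ) = 0 from rfl, PowerSeries.coeff_zero_eq_constantCoeff] at h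
    rw [h, Matrix.det_fin_two, map_sub, map_mul, map_mul, hcc 0 0, hcc 1 1, hcc 0 1, hcc 1 0]
    exact hdetc
  have hdetPunit : IsUnit Pm.det :=
    isUnit_of_ofPowerSeries Pm.det (hdetP_Lau ▸ hdetLau) hc0
  have hPu : IsUnit Pm := (Matrix.isUnit_iff_isUnit_det Pm).mpr hdetPunit
  refine ⟨m 0, m 1, hPu.unit, ?_⟩
  rw [hPu.unit_spec]
  exact Emain
end

section
/- Let q = p^e be a prime power and k a field containing 𝔽_q. Suppose g ∈ GL₂(k((z))) satisfies: (i) all entries of g⁻¹·diag(z,1)·σ(g) lie in k[[z]]; and (ii) det(g⁻¹·diag(z,1)·σ(g)) = z·u for some unit u of k[[z]]. Then there exists a UNIQUE pair of integers (m, n) such that diag(z^{-m}, z^{-n})·g ∈ GL₂(k[[z]]). -/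
open HahnSeries

section Stmt4Aux
variable {k : Type*} [Field k]

lemma aux_coeff_mul_lead (x y : LaurentSeries k) (m : ℤ)
    (hx : ∀ a : ℤ, a < m → x.coeff a = 0) (hy : ∀ b : ℤ, b < 0 → y.coeff b = 0) :
    (x * y).coeff m = x.coeff m * y.coeff 0 := by
  rw [HahnSeries.coeff_mul]
  have hsub : Finset.antidiagonal x.isPWO_support y.isPWO_support m ⊆ {(m, 0)} := by
    intro p hp
    rw [Finset.mem_antidiagonal] at hp
    obtain ⟨h1, h2, h3⟩ := hp
    have ha : m ≤ p.1 := not_lt.1 fun h => h1 (hx _ h)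
    have hb : 0 ≤ p.2 := not_lt.1 fun h => h2 (hy _ h)
    have hp1 : p.1 = m := by omega
    have hp2 : p.2 = 0 := by omega
    simp [Finset.mem_singleton, Prod.ext_iff, hp1, hp2]
  rw [Finset.sum_subset hsub ?_, Finset.sum_singleton]
  intro p hp hnp
  rw [Finset.mem_singleton] at hp
  subst hp
  rw [Finset.mem_antidiagonal] at hnp
  simp only [HahnSeries.mem_support, ne_eq, add_zero, and_true, not_and, not_not] at hnp
  by_cases hA : x.coeff m = 0
  · simp [hA]
  · rw [hnp fun h => hA h, mul_zero]

lemma aux_single_one_mul_coeff (x : LaurentSeries k) (c t : ℤ) :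
    ((HahnSeries.single c (1 : k) : LaurentSeries k) * x).coeff t = x.coeff (t - c) := by
  have h := HahnSeries.coeff_single_mul_add (r := (1 : k)) (x := x) (a := t - c) (b := c)
  rw [sub_add_cancel] at h
  rw [h, one_mul]

lemma aux_exists_least (x y : LaurentSeries k) (h : ¬(x = 0 ∧ y = 0)) :
    ∃ m : ℤ, (x.coeff m ≠ 0 ∨ y.coeff m ≠ 0) ∧ ∀ t : ℤ, t < m → x.coeff t = 0 ∧ y.coeff t = 0 := by
  have hWF : (x.support ∪ y.support).IsWF := x.isWF_support.union y.isWF_support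
  have hne : (x.support ∪ y.support).Nonempty := by
    rcases not_and_or.1 h with h' | h'
    · exact (HahnSeries.support_nonempty_iff.2 h').mono Set.subset_union_left
    · exact (HahnSeries.support_nonempty_iff.2 h').mono Set.subset_union_right
  refine ⟨hWF.min hne, ?_, ?_⟩
  · rcases hWF.min_mem hne with h' | h'
    · exact Or.inl h'
    · exact Or.inr h'
  · intro t ht
    have htn : t ∉ x.support ∪ y.support := fun hmem => hWF.not_lt_min hne hmem ht
    constructor
    · by_contra hc; exact htn (Or.inl hc)
    · by_contra hc; exact htn (Or.inr hc)

lemma aux_coeff_ofPowerSeries (f : PowerSeries k) (t : ℤ) :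
    (HahnSeries.ofPowerSeries ℤ k f).coeff t
      = if t < 0 then 0 else PowerSeries.coeff t.natAbs f :=
  PowerSeries.coeff_coe f t

end Stmt4Aux

/-- For `q = p^e` a prime power and `k` a field containing `𝔽_q`,
if `g ∈ GL₂(k((z)))` is such that `g⁻¹·diag(z,1)·σ(g)` has all entries in `k[[z]]` and
determinant `z·u` with `u ∈ k[[z]]ˣ`, then there is a UNIQUE pair of integers `(m, n)` with
`diag(z^{-m}, z^{-n})·g ∈ GL₂(k[[z]])`. -/
theorem stmt_4 {p e q : ℕ} [Fact p.Prime] (hq : q = p ^ e) (he : 0 < e)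
    {k : Type*} [Field k] [Algebra (GaloisField p e) k]
    (σ : LaurentSeries k →+* LaurentSeries k)
    (hσ : ∀ (f : LaurentSeries k) (n : ℤ), (σ f).coeff n = f.coeff n ^ q)
    (g : (Matrix (Fin 2) (Fin 2) (LaurentSeries k))ˣ)
    (τ : Matrix (Fin 2) (Fin 2) (LaurentSeries k))
    (hτ : τ = (↑g⁻¹ : Matrix (Fin 2) (Fin 2) (LaurentSeries k)) *
        Matrix.diagonal ![(HahnSeries.single (1 : ℤ) (1 : k) : LaurentSeries k), 1] *
        ((↑g : Matrix (Fin 2) (Fin 2) (LaurentSeries k)).map ⇑σ))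
    (hint : ∀ (i j : Fin 2) (n : ℤ), n < 0 → (τ i j).coeff n = 0)
    (hdet : ∃ u : (PowerSeries k)ˣ,
      τ.det = (HahnSeries.single (1 : ℤ) (1 : k) : LaurentSeries k) *
        HahnSeries.ofPowerSeries ℤ k ↑u) :
    ∃! mn : ℤ × ℤ, ∃ G : (Matrix (Fin 2) (Fin 2) (PowerSeries k))ˣ,
      Matrix.diagonal ![(HahnSeries.single (-mn.1) (1 : k) : LaurentSeries k),
          (HahnSeries.single (-mn.2) (1 : k) : LaurentSeries k)] *
          (↑g : Matrix (Fin 2) (Fin 2) (LaurentSeries k)) =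
        (↑G : Matrix (Fin 2) (Fin 2) (PowerSeries k)).map ⇑(HahnSeries.ofPowerSeries ℤ k) := by
  classical
  have hq0 : q ≠ 0 := by
    subst hq
    exact pow_ne_zero _ (Fact.out : p.Prime).ne_zero
  set gv : Matrix (Fin 2) (Fin 2) (LaurentSeries k) := (↑g : Matrix (Fin 2) (Fin 2) (LaurentSeries k)) with hgv
  -- rows of g are nonzero
  have hrow : ∀ i : Fin 2, ¬(gv i 0 = 0 ∧ gv i 1 = 0) := by
    intro i hi
    have h1 : gv * (↑g⁻¹ : Matrix (Fin 2) (Fin 2) (LaurentSeries k)) = 1 := g.mul_inv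
    have h2 := congrFun (congrFun h1 i) i
    rw [Matrix.mul_apply, Fin.sum_univ_two, Matrix.one_apply_eq, hi.1, hi.2, zero_mul,
      zero_mul, add_zero] at h2
    exact zero_ne_one h2
  obtain ⟨m, hmne, hmlt⟩ := aux_exists_least (gv 0 0) (gv 0 1) (hrow 0)
  obtain ⟨n, hnne, hnlt⟩ := aux_exists_least (gv 1 0) (gv 1 1) (hrow 1)
  have hm0 : ∀ (j : Fin 2) (a : ℤ), a < m → (gv 0 j).coeff a = 0 := by
    intro j a ha
    fin_cases j
    · exact (hmlt a ha).1
    · exact (hmlt a ha).2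
  have hn0 : ∀ (j : Fin 2) (a : ℤ), a < n → (gv 1 j).coeff a = 0 := by
    intro j a ha
    fin_cases j
    · exact (hnlt a ha).1
    · exact (hnlt a ha).2
  -- main multiplicative equation
  have hmul : gv * τ =
      Matrix.diagonal ![(HahnSeries.single (1 : ℤ) (1 : k) : LaurentSeries k), 1] *
        (gv.map ⇑σ) := by
    rw [hτ, ← Matrix.mul_assoc, ← Matrix.mul_assoc, g.mul_inv, Matrix.one_mul]
  have hE : ∀ i j : Fin 2, gv i 0 * τ 0 j + gv i 1 * τ 1 j =
      (![(HahnSeries.single (1 : ℤ) (1 : k) : LaurentSeries k), 1] i) * σ (gv i j) := by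
    intro i j
    have h := congrFun (congrFun hmul i) j
    rwa [Matrix.mul_apply, Fin.sum_univ_two, Matrix.diagonal_mul, Matrix.map_apply] at h
  -- coefficient equations
  have hstar : ∀ j : Fin 2,
      (gv 0 0).coeff m * (τ 0 j).coeff 0 + (gv 0 1).coeff m * (τ 1 j).coeff 0 = 0 := by
    intro j
    have h := congrArg (fun x : LaurentSeries k => x.coeff m) (hE 0 j)
    simp only [HahnSeries.coeff_add] at h
    rw [aux_coeff_mul_lead _ _ m (fun a ha => (hmlt a ha).1) (hint 0 j),
      aux_coeff_mul_lead _ _ m (fun a ha => (hmlt a ha).2) (hint 1 j),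
      show (![(HahnSeries.single (1 : ℤ) (1 : k) : LaurentSeries k), 1] 0)
        = (HahnSeries.single (1 : ℤ) (1 : k) : LaurentSeries k) from rfl,
      aux_single_one_mul_coeff, hσ, hm0 j (m - 1) (by omega), zero_pow hq0] at h
    exact h
  have hstar2 : ∀ j : Fin 2,
      (gv 1 0).coeff n * (τ 0 j).coeff 0 + (gv 1 1).coeff n * (τ 1 j).coeff 0
        = ((gv 1 j).coeff n) ^ q := by
    intro j
    have h := congrArg (fun x : LaurentSeries k => x.coeff n) (hE 1 j)
    simp only [HahnSeries.coeff_add] at h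
    rw [aux_coeff_mul_lead _ _ n (fun a ha => (hnlt a ha).1) (hint 0 j),
      aux_coeff_mul_lead _ _ n (fun a ha => (hnlt a ha).2) (hint 1 j),
      show (![(HahnSeries.single (1 : ℤ) (1 : k) : LaurentSeries k), 1] 1)
        = (1 : LaurentSeries k) from rfl, one_mul, hσ] at h
    exact h
  set A := (gv 0 0).coeff m with hA
  set B := (gv 0 1).coeff m with hB
  set C := (gv 1 0).coeff n with hC
  set D := (gv 1 1).coeff n with hD
  -- the leading 2x2 matrix is invertible
  have hdelta : A * D - B * C ≠ 0 := by
    intro hδ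
    have hzero1 : ∀ j : Fin 2, A * ((gv 1 j).coeff n) ^ q = 0 := by
      intro j
      linear_combination (C : k) * hstar j - A * hstar2 j + (τ 1 j).coeff 0 * hδ
    have hzero2 : ∀ j : Fin 2, B * ((gv 1 j).coeff n) ^ q = 0 := by
      intro j
      linear_combination (D : k) * hstar j - B * hstar2 j - (τ 0 j).coeff 0 * hδ
    have hCD0 : C = 0 ∧ D = 0 := by
      rcases hmne with hA0 | hB0
      · constructor
        · have := (mul_eq_zero.1 (hzero1 0)).resolve_left hA0
          exact pow_eq_zero_iff hq0 |>.1 this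
        · have := (mul_eq_zero.1 (hzero1 1)).resolve_left hA0
          exact pow_eq_zero_iff hq0 |>.1 this
      · constructor
        · have := (mul_eq_zero.1 (hzero2 0)).resolve_left hB0
          exact pow_eq_zero_iff hq0 |>.1 this
        · have := (mul_eq_zero.1 (hzero2 1)).resolve_left hB0
          exact pow_eq_zero_iff hq0 |>.1 this
    rcases hnne with h' | h'
    · exact h' hCD0.1
    · exact h' hCD0.2
  -- construct the power series matrix
  set vord : Fin 2 → ℤ := ![m, n] with hvord
  have hvord0 : vord 0 = m := rfl
  have hvord1 : vord 1 = n := rfl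
  have hlow : ∀ (i j : Fin 2) (a : ℤ), a < vord i → (gv i j).coeff a = 0 := by
    intro i
    fin_cases i
    · exact hm0
    · exact hn0
  set P : Matrix (Fin 2) (Fin 2) (PowerSeries k) :=
    Matrix.of fun i j => PowerSeries.mk fun t => (gv i j).coeff ((t : ℤ) + vord i) with hP
  have hPcc : ∀ i j : Fin 2, PowerSeries.constantCoeff (P i j) = (gv i j).coeff (vord i) := by
    intro i j
    rw [← PowerSeries.coeff_zero_eq_constantCoeff_apply]
    show PowerSeries.coeff 0 (PowerSeries.mk fun t => (gv i j).coeff ((t : ℤ) + vord i)) = _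
    rw [PowerSeries.coeff_mk]
    norm_num
  have hPdet : IsUnit P.det := by
    rw [PowerSeries.isUnit_iff_constantCoeff, Matrix.det_fin_two, map_sub, map_mul, map_mul,
      hPcc, hPcc, hPcc, hPcc, hvord0, hvord1]
    exact isUnit_iff_ne_zero.2 hdelta
  set G : (Matrix (Fin 2) (Fin 2) (PowerSeries k))ˣ := Matrix.nonsingInvUnit P hPdet with hG
  have hGcoe : (↑G : Matrix (Fin 2) (Fin 2) (PowerSeries k)) = P := rfl
  -- the matrix identity for (m, n)
  have hmain : Matrix.diagonal ![(HahnSeries.single (-m) (1 : k) : LaurentSeries k),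
      (HahnSeries.single (-n) (1 : k) : LaurentSeries k)] * gv
      = P.map ⇑(HahnSeries.ofPowerSeries ℤ k) := by
    ext i j t
    rw [Matrix.diagonal_mul, Matrix.map_apply]
    have hdiag : (![(HahnSeries.single (-m) (1 : k) : LaurentSeries k),
        (HahnSeries.single (-n) (1 : k) : LaurentSeries k)] i)
        = (HahnSeries.single (-(vord i)) (1 : k) : LaurentSeries k) := by
      fin_cases i <;> rfl
    rw [hdiag, aux_single_one_mul_coeff, sub_neg_eq_add, aux_coeff_ofPowerSeries]
    by_cases ht : t < 0
    · rw [if_pos ht, hlow i j (t + vord i) (by omega)]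
    · rw [if_neg ht]
      show _ = PowerSeries.coeff t.natAbs
        (PowerSeries.mk fun s => (gv i j).coeff ((s : ℤ) + vord i))
      rw [PowerSeries.coeff_mk, Int.natAbs_of_nonneg (not_lt.1 ht)]
  refine ⟨(m, n), ⟨G, by rw [hGcoe]; exact hmain⟩, ?_⟩
  -- uniqueness
  rintro ⟨a, b⟩ ⟨G', hG'⟩
  have hent : ∀ (i j : Fin 2) (t : ℤ),
      (gv i j).coeff (t + ![a, b] i)
        = if t < 0 then 0 else PowerSeries.coeff t.natAbs
            ((↑G' : Matrix (Fin 2) (Fin 2) (PowerSeries k)) i j) := by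
    intro i j t
    have h := congrFun (congrFun hG' i) j
    rw [Matrix.diagonal_mul, Matrix.map_apply] at h
    have hdiag : (![(HahnSeries.single (-a) (1 : k) : LaurentSeries k),
        (HahnSeries.single (-b) (1 : k) : LaurentSeries k)] i)
        = (HahnSeries.single (-(![a, b] i)) (1 : k) : LaurentSeries k) := by
      fin_cases i <;> rfl
    rw [hdiag] at h
    have h2 := congrArg (fun x : LaurentSeries k => x.coeff t) h
    rw [aux_single_one_mul_coeff, sub_neg_eq_add, aux_coeff_ofPowerSeries] at h2
    exact h2
  -- the constant-term matrix of G' has nonzero rows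
  have hGdet : PowerSeries.constantCoeff
      ((↑G' : Matrix (Fin 2) (Fin 2) (PowerSeries k)).det) ≠ 0 := by
    have hu : IsUnit ((↑G' : Matrix (Fin 2) (Fin 2) (PowerSeries k)).det) :=
      (Matrix.isUnit_iff_isUnit_det _).1 G'.isUnit
    exact (hu.map (PowerSeries.constantCoeff)).ne_zero
  have hGrow : ∀ i : Fin 2, ∃ j : Fin 2, PowerSeries.constantCoeff
      ((↑G' : Matrix (Fin 2) (Fin 2) (PowerSeries k)) i j) ≠ 0 := by
    intro i
    by_contra hcon
    push_neg at hcon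
    apply hGdet
    rw [Matrix.det_fin_two, map_sub, map_mul, map_mul]
    fin_cases i
    · have hcon' : ∀ j : Fin 2, PowerSeries.constantCoeff
          ((↑G' : Matrix (Fin 2) (Fin 2) (PowerSeries k)) 0 j) = 0 := hcon
      rw [hcon' 0, hcon' 1, zero_mul, zero_mul, sub_zero]
    · have hcon' : ∀ j : Fin 2, PowerSeries.constantCoeff
          ((↑G' : Matrix (Fin 2) (Fin 2) (PowerSeries k)) 1 j) = 0 := hcon
      rw [hcon' 1, hcon' 0, mul_zero, mul_zero, sub_zero]
  -- coefficients of row i vanish below ![a,b] i, and are nonzero at ![a,b] i for some j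
  have hvanish : ∀ (i j : Fin 2) (u : ℤ), u < ![a, b] i → (gv i j).coeff u = 0 := by
    intro i j u hu
    have h := hent i j (u - ![a, b] i)
    rw [sub_add_cancel, if_pos (by omega)] at h
    exact h
  have hnonzero : ∀ i : Fin 2, ∃ j : Fin 2, (gv i j).coeff (![a, b] i) ≠ 0 := by
    intro i
    obtain ⟨j, hj⟩ := hGrow i
    refine ⟨j, ?_⟩
    have h := hent i j 0
    rw [zero_add, if_neg (by omega)] at h
    rw [h]
    simpa [PowerSeries.coeff_zero_eq_constantCoeff_apply] using hj
  -- conclude a = m, b = n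
  have ham : a = m := by
    by_contra hne
    rcases lt_or_gt_of_ne hne with hlt | hgt
    · obtain ⟨j, hj⟩ := hnonzero 0
      exact hj (hm0 j _ (by simpa using hlt))
    · rcases hmne with h' | h'
      · exact h' (hvanish 0 0 m (by simpa using hgt))
      · exact h' (hvanish 0 1 m (by simpa using hgt))
  have hbn : b = n := by
    by_contra hne
    rcases lt_or_gt_of_ne hne with hlt | hgt
    · obtain ⟨j, hj⟩ := hnonzero 1
      exact hj (hn0 j _ (by simpa using hlt))
    · rcases hnne with h' | h'
      · exact h' (hvanish 1 0 n (by simpa using hgt))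
      · exact h' (hvanish 1 1 n (by simpa using hgt))
  simp [ham, hbn]
end

section
/- Let q = p^e be a prime power, A a commutative ring containing 𝔽_q, n ≥ 1 an integer, and ζ, h ∈ A elements with ζ^{q^n} = 0 and h^{q^n} = 0. Then each z − ζ^{q^j} is a unit of A((z)), the matrix η_{n,h} is invertible over A((z)), and η_{n,h}⁻¹ · diag(z,1) · σ(η_{n,h}) equals the matrix with rows (z − ζ, 0) and (h, 1). -/
/-- The quasi-isogeny matrix `η_{n,h}` over `A((z))`, with rows
`(∏_{i=0}^{n-1} z·(z−ζ^{q^i})⁻¹, 0)` and `(−∑_{i=0}^{n-1} h^{q^i}·∏_{j=0}^{i}(z−ζ^{q^j})⁻¹, 1)`. -/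
noncomputable def eta (q : ℕ) {A : Type*} [CommRing A] (ζ h : A) (n : ℕ) :
    Matrix (Fin 2) (Fin 2) (LaurentSeries A) :=
  !![∏ i ∈ Finset.range n, (HahnSeries.single (1 : ℤ) (1 : A) : LaurentSeries A) *
        Ring.inverse ((HahnSeries.single (1 : ℤ) (1 : A) : LaurentSeries A) -
          HahnSeries.C (ζ ^ q ^ i)), 0;
     -∑ i ∈ Finset.range n, HahnSeries.C (h ^ q ^ i) *
        ∏ j ∈ Finset.range (i + 1),
          Ring.inverse ((HahnSeries.single (1 : ℤ) (1 : A) : LaurentSeries A) -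
            HahnSeries.C (ζ ^ q ^ j)), 1]

/-- For `q = p^e` a prime power, `A` a commutative ring containing `𝔽_q`,
`n ≥ 1` and `ζ, h ∈ A` with `ζ^{q^n} = 0` and `h^{q^n} = 0`: each `z − ζ^{q^j}` is a unit of
`A((z))`, the matrix `η_{n,h}` is invertible over `A((z))`, and
`η_{n,h}⁻¹ · diag(z,1) · σ(η_{n,h}) = [[z − ζ, 0], [h, 1]]`. -/
theorem stmt_5 {p e q : ℕ} [Fact p.Prime] (hq : q = p ^ e) (he : 0 < e)
    {A : Type*} [CommRing A] [Algebra (GaloisField p e) A]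
    (σ : LaurentSeries A →+* LaurentSeries A)
    (hσ : ∀ (f : LaurentSeries A) (n : ℤ), (σ f).coeff n = f.coeff n ^ q)
    (n : ℕ) (hn : 1 ≤ n) (ζ h : A) (hζ : ζ ^ q ^ n = 0) (hh : h ^ q ^ n = 0) :
    (∀ j : ℕ, IsUnit ((HahnSeries.single (1 : ℤ) (1 : A) : LaurentSeries A) -
        HahnSeries.C (ζ ^ q ^ j))) ∧
      IsUnit (eta q ζ h n) ∧
        Ring.inverse (eta q ζ h n) *
            Matrix.diagonal ![(HahnSeries.single (1 : ℤ) (1 : A) : LaurentSeries A), 1] *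
            ((eta q ζ h n).map ⇑σ) =
          !![(HahnSeries.single (1 : ℤ) (1 : A) : LaurentSeries A) - HahnSeries.C ζ, 0;
              HahnSeries.C h, 1] := by
  have hq0 : q ≠ 0 := by
    subst hq; exact pow_ne_zero _ (Fact.out (p := p.Prime)).ne_zero
  set z : LaurentSeries A := HahnSeries.single (1 : ℤ) (1 : A) with hzdef
  -- z is a unit
  have hz : IsUnit z := by
    apply IsUnit.of_mul_eq_one (HahnSeries.single (-1 : ℤ) (1 : A))
    rw [HahnSeries.single_mul_single]
    norm_num
  -- σ fixes z
  have hσz : σ z = z := by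
    ext m
    rw [hσ, hzdef, HahnSeries.coeff_single]
    split_ifs <;> simp [zero_pow hq0]
  -- σ on constants
  have hσC : ∀ c : A, σ (HahnSeries.C c) = HahnSeries.C (c ^ q) := by
    intro c
    ext m
    rw [hσ]
    rw [show (HahnSeries.C c : LaurentSeries A) = HahnSeries.single 0 c from rfl,
      show (HahnSeries.C (c ^ q) : LaurentSeries A) = HahnSeries.single 0 (c ^ q) from rfl,
      HahnSeries.coeff_single, HahnSeries.coeff_single]
    split_ifs <;> simp [zero_pow hq0]
  -- the units u j
  have hu : ∀ j : ℕ, IsUnit (z - HahnSeries.C (ζ ^ q ^ j)) := by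
    intro j
    have hnilζ : IsNilpotent (ζ ^ q ^ j) := by
      refine ⟨q ^ n, ?_⟩
      rw [← pow_mul, mul_comm, pow_mul, hζ, zero_pow (pow_ne_zero _ hq0)]
    have hnil : IsNilpotent (-(HahnSeries.C (ζ ^ q ^ j)) : LaurentSeries A) :=
      (hnilζ.map (HahnSeries.C : A →+* LaurentSeries A)).neg
    have := hnil.isUnit_add_left_of_commute hz (Commute.all _ _)
    rwa [← sub_eq_add_neg] at this
  -- σ on Ring.inverse
  have hσinv : ∀ x : LaurentSeries A, IsUnit x →
      σ (Ring.inverse x) = Ring.inverse (σ x) := by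
    intro x hx
    have h1 : σ x * σ (Ring.inverse x) = 1 := by
      rw [← map_mul, Ring.mul_inverse_cancel x hx, map_one]
    have hux : IsUnit (σ x) := IsUnit.of_mul_eq_one _ h1
    calc σ (Ring.inverse x) = Ring.inverse (σ x) * (σ x * σ (Ring.inverse x)) := by
          rw [← mul_assoc, Ring.inverse_mul_cancel _ hux, one_mul]
      _ = Ring.inverse (σ x) := by rw [h1, mul_one]
  -- σ of u j
  have hσu : ∀ j : ℕ, σ (z - HahnSeries.C (ζ ^ q ^ j)) = z - HahnSeries.C (ζ ^ q ^ (j + 1)) := by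
    intro j
    rw [map_sub, hσz, hσC, ← pow_mul, ← pow_succ]
  set a : LaurentSeries A :=
    ∏ i ∈ Finset.range n, z * Ring.inverse (z - HahnSeries.C (ζ ^ q ^ i)) with hadef
  set b : LaurentSeries A :=
    -∑ i ∈ Finset.range n, HahnSeries.C (h ^ q ^ i) *
      ∏ j ∈ Finset.range (i + 1), Ring.inverse (z - HahnSeries.C (ζ ^ q ^ j)) with hbdef
  have hE : eta q ζ h n = !![a, 0; b, 1] := rfl
  have ha : IsUnit a := by
    rw [hadef]
    apply Finset.prod_induction _ IsUnit (fun _ _ => IsUnit.mul) isUnit_one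
    intro i _
    exact hz.mul (isUnit_ringInverse.mpr (hu i))
  have hEunit : IsUnit (eta q ζ h n) := by
    rw [hE, Matrix.isUnit_iff_isUnit_det, Matrix.det_fin_two_of]
    simpa using ha
  refine ⟨hu, hEunit, ?_⟩
  -- notation
  set f : ℕ → LaurentSeries A := fun i => z * Ring.inverse (z - HahnSeries.C (ζ ^ q ^ i))
    with hfdef
  have hfn : f n = 1 := by
    rw [hfdef]; simp only [hζ, map_zero, sub_zero]
    exact Ring.mul_inverse_cancel z hz
  -- scalar identity 1
  have hσa : σ a = ∏ i ∈ Finset.range n, f (i + 1) := by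
    rw [hadef, map_prod]
    refine Finset.prod_congr rfl fun i _ => ?_
    rw [map_mul, hσz, hσinv _ (hu i), hσu]
  have key1 : z * σ a = a * (z - HahnSeries.C ζ) := by
    have h1 : σ a * f 0 = a := by
      rw [hσa, ← Finset.prod_range_succ' f n, Finset.prod_range_succ, hfn, mul_one, hadef]
    have h2 : (σ a * f 0) * (z - HahnSeries.C (ζ ^ q ^ 0)) = a * (z - HahnSeries.C (ζ ^ q ^ 0)) := by
      rw [h1]
    rw [hfdef] at h2
    simp only at h2
    calc z * σ a
        = σ a * z * (Ring.inverse (z - HahnSeries.C (ζ ^ q ^ 0)) * (z - HahnSeries.C (ζ ^ q ^ 0))) := by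
          rw [Ring.inverse_mul_cancel _ (hu 0), mul_one]; ring
      _ = (σ a * (z * Ring.inverse (z - HahnSeries.C (ζ ^ q ^ 0)))) * (z - HahnSeries.C (ζ ^ q ^ 0)) := by
          ring
      _ = a * (z - HahnSeries.C (ζ ^ q ^ 0)) := h2
      _ = a * (z - HahnSeries.C ζ) := by norm_num
  -- scalar identity 2
  set G : ℕ → LaurentSeries A := fun i => HahnSeries.C (h ^ q ^ i) *
    ∏ j ∈ Finset.range i, Ring.inverse (z - HahnSeries.C (ζ ^ q ^ (j + 1))) with hGdef
  have hG0 : G 0 = HahnSeries.C h := by rw [hGdef]; norm_num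
  have hGn : G n = 0 := by rw [hGdef]; simp [hh]
  have hσb : σ b = -∑ i ∈ Finset.range n, G (i + 1) := by
    rw [hbdef, map_neg, map_sum, neg_inj]
    refine Finset.sum_congr rfl fun i _ => ?_
    rw [map_mul, hσC, map_prod, ← pow_mul, ← pow_succ, hGdef]
    simp only
    congr 1
    refine Finset.prod_congr rfl fun j _ => ?_
    rw [hσinv _ (hu j), hσu]
  have hbu : b * (z - HahnSeries.C (ζ ^ q ^ 0)) = -∑ i ∈ Finset.range n, G i := by
    have step : ∀ i : ℕ, (HahnSeries.C (h ^ q ^ i) *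
        ∏ j ∈ Finset.range (i + 1), Ring.inverse (z - HahnSeries.C (ζ ^ q ^ j))) *
        (z - HahnSeries.C (ζ ^ q ^ 0)) = G i := by
      intro i
      have hGi : G i = HahnSeries.C (h ^ q ^ i) *
          ∏ j ∈ Finset.range i, Ring.inverse (z - HahnSeries.C (ζ ^ q ^ (j + 1))) := rfl
      rw [hGi, Finset.prod_range_succ' (fun j => Ring.inverse (z - HahnSeries.C (ζ ^ q ^ j))) i]
      have hc : Ring.inverse (z - HahnSeries.C (ζ ^ q ^ 0)) * (z - HahnSeries.C (ζ ^ q ^ 0))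
          = 1 := Ring.inverse_mul_cancel _ (hu 0)
      linear_combination (HahnSeries.C (h ^ q ^ i) *
        ∏ j ∈ Finset.range i, Ring.inverse (z - HahnSeries.C (ζ ^ q ^ (j + 1)))) * hc
    have hsum : (∑ i ∈ Finset.range n, HahnSeries.C (h ^ q ^ i) *
        ∏ j ∈ Finset.range (i + 1), Ring.inverse (z - HahnSeries.C (ζ ^ q ^ j))) *
        (z - HahnSeries.C (ζ ^ q ^ 0)) = ∑ i ∈ Finset.range n, G i := by
      rw [Finset.sum_mul]
      exact Finset.sum_congr rfl fun i _ => step i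
    rw [hbdef]
    linear_combination -hsum
  have key2 : σ b = b * (z - HahnSeries.C ζ) + HahnSeries.C h := by
    have htel : ∑ i ∈ Finset.range n, G (i + 1) - ∑ i ∈ Finset.range n, G i = G n - G 0 := by
      rw [← Finset.sum_sub_distrib]
      exact Finset.sum_range_sub G n
    have h0 : (ζ : A) ^ q ^ 0 = ζ := by norm_num
    have hh0 : (h : A) ^ q ^ 0 = h := by norm_num
    rw [← h0, ← hh0]
    rw [hσb]
    rw [hGn] at htel
    rw [hbu]
    linear_combination -htel
  -- assemble
  have hmain : Matrix.diagonal ![z, 1] * (eta q ζ h n).map ⇑σ =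
      eta q ζ h n * !![z - HahnSeries.C ζ, 0; HahnSeries.C h, 1] := by
    have hmap : (eta q ζ h n).map ⇑σ = !![σ a, 0; σ b, 1] := by
      rw [hE]
      ext i j
      fin_cases i <;> fin_cases j <;> simp [Matrix.map_apply]
    have hdiag : (Matrix.diagonal ![z, 1] : Matrix (Fin 2) (Fin 2) (LaurentSeries A)) =
        !![z, 0; 0, 1] := by
      ext i j
      fin_cases i <;> fin_cases j <;> simp [Matrix.diagonal]
    rw [hmap, hdiag, hE, Matrix.mul_fin_two, Matrix.mul_fin_two]
    simp only [zero_mul, mul_zero, add_zero, zero_add, one_mul, mul_one]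
    rw [key1, key2]
  calc Ring.inverse (eta q ζ h n) * Matrix.diagonal ![z, 1] * ((eta q ζ h n).map ⇑σ)
      = Ring.inverse (eta q ζ h n) * (Matrix.diagonal ![z, 1] * (eta q ζ h n).map ⇑σ) := by
        rw [mul_assoc]
    _ = Ring.inverse (eta q ζ h n) * (eta q ζ h n * !![z - HahnSeries.C ζ, 0; HahnSeries.C h, 1]) := by
        rw [hmain]
    _ = !![z - HahnSeries.C ζ, 0; HahnSeries.C h, 1] := by
        rw [← mul_assoc, Ring.inverse_mul_cancel _ hEunit, one_mul]
end

section
/- Let q = p^e be a prime power, A a commutative ring containing 𝔽_q, n ≥ 1 an integer, J ⊆ A an ideal with J^{q^{n+1}} = 0, and ζ, h ∈ J. Suppose η ∈ GL₂(A((z))) satisfies: (i) all entries of τ := η⁻¹·diag(z,1)·σ(η) lie in A[[z]]; (ii) det τ = (z − ζ)·u for some unit u of A[[z]]; and (iii) every coefficient of every entry of the matrix η⁻¹ − η_{n,h}⁻¹ lies in the ideal J^{q^n}. Then there exist h̃ ∈ J with h̃ − h ∈ J^{q^n} and a matrix g ∈ GL₂(A[[z]]) such that η = η_{n+1,h̃}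 · g. -/
open HahnSeries Finset

namespace Stmt7Aux

noncomputable section

variable {A : Type*} [CommRing A]

/-- `z` as a Laurent series. -/
abbrev Zl (A : Type*) [CommRing A] : LaurentSeries A := HahnSeries.single (1 : ℤ) (1 : A)

lemma Zl_mul_coeff (x : LaurentSeries A) (k : ℤ) : (Zl A * x).coeff k = x.coeff (k - 1) := by
  have := HahnSeries.coeff_single_mul_add (r := (1 : A)) (x := x) (a := k - 1) (b := (1 : ℤ))
  rw [sub_add_cancel] at this
  rw [this, one_mul]

lemma C_mul_coeff (c : A) (x : LaurentSeries A) (k : ℤ) :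
    (HahnSeries.C c * x).coeff k = c * x.coeff k := by
  rw [HahnSeries.C_apply, HahnSeries.coeff_single_zero_mul]

lemma mul_C_coeff (c : A) (x : LaurentSeries A) (k : ℤ) :
    (x * HahnSeries.C c).coeff k = x.coeff k * c := by
  rw [HahnSeries.C_apply, HahnSeries.coeff_mul_single_zero]

lemma mul_single_coeff' (x : LaurentSeries A) (b : ℤ) (r : A) (k : ℤ) :
    (x * HahnSeries.single b r).coeff k = x.coeff (k - b) * r := by
  have := HahnSeries.coeff_mul_single_add (r := r) (x := x) (a := k - b) (b := b)
  rwa [sub_add_cancel] at this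

/-- explicit inverse of `z - C c` for `c` nilpotent -/
def vinv (c : A) (N : ℕ) : LaurentSeries A :=
  ∑ j ∈ range N, HahnSeries.single (-(j + 1) : ℤ) (c ^ j)

lemma ZsubC_mul_vinv (c : A) {N : ℕ} (hc : c ^ N = 0) :
    (Zl A - HahnSeries.C c) * vinv c N = 1 := by
  have hterm : ∀ j : ℕ, (Zl A - HahnSeries.C c) * HahnSeries.single (-(j + 1) : ℤ) (c ^ j)
      = HahnSeries.single (-(j : ℤ)) (c ^ j)
        - HahnSeries.single (-((j + 1 : ℕ) : ℤ)) (c ^ (j + 1)) := by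
    intro j
    have e1 : (1 : ℤ) + -(j + 1) = -j := by ring
    have e2 : (0 : ℤ) + -(j + 1) = -((j + 1 : ℕ) : ℤ) := by push_cast; ring
    rw [sub_mul, HahnSeries.single_mul_single, HahnSeries.C_apply, HahnSeries.single_mul_single,
      e1, e2, one_mul, ← pow_succ']
  rw [vinv, Finset.mul_sum]
  calc ∑ j ∈ range N, (Zl A - HahnSeries.C c) * HahnSeries.single (-(j + 1) : ℤ) (c ^ j)
      = ∑ j ∈ range N, ((fun j : ℕ => HahnSeries.single (-(j : ℤ)) (c ^ j)) j
          - (fun j : ℕ => HahnSeries.single (-(j : ℤ)) (c ^ j)) (j + 1)) := by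
        exact Finset.sum_congr rfl fun j _ => hterm j
    _ = HahnSeries.single (-(0 : ℕ) : ℤ) (c ^ 0) - HahnSeries.single (-(N : ℤ)) (c ^ N) :=
        Finset.sum_range_sub' _ N
    _ = 1 := by
        rw [hc, HahnSeries.single_eq_zero, sub_zero]
        norm_num

lemma isUnit_ZsubC (c : A) {N : ℕ} (hc : c ^ N = 0) : IsUnit (Zl A - HahnSeries.C c) :=
  IsUnit.of_mul_eq_one _ (ZsubC_mul_vinv c hc)

lemma rinv_eq {R : Type*} [CommMonoidWithZero R] {x y : R} (h : x * y = 1) :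
    Ring.inverse x = y := by
  have hu : IsUnit x := IsUnit.of_mul_eq_one _ h
  calc Ring.inverse x = Ring.inverse x * (x * y) := by rw [h, mul_one]
    _ = (Ring.inverse x * x) * y := by rw [mul_assoc]
    _ = y := by rw [Ring.inverse_mul_cancel _ hu, one_mul]

lemma ZsubC_mul_rinv (c : A) {N : ℕ} (hc : c ^ N = 0) :
    (Zl A - HahnSeries.C c) * Ring.inverse (Zl A - HahnSeries.C c) = 1 := by
  rw [rinv_eq (ZsubC_mul_vinv c hc)]; exact ZsubC_mul_vinv c hc

lemma isUnit_Zl : IsUnit (Zl A) := by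
  apply IsUnit.of_mul_eq_one (HahnSeries.single (-1 : ℤ) (1 : A))
  rw [HahnSeries.single_mul_single]
  norm_num

/-- The ideal of Laurent series all of whose coefficients lie in `I`. -/
def coeffIdeal (I : Ideal A) : Ideal (LaurentSeries A) where
  carrier := {f | ∀ k, f.coeff k ∈ I}
  add_mem' := fun hf hg k => by
    rw [HahnSeries.coeff_add]; exact I.add_mem (hf k) (hg k)
  zero_mem' := fun k => by rw [HahnSeries.coeff_zero]; exact I.zero_mem
  smul_mem' := fun c f hf k => by
    rw [smul_eq_mul, HahnSeries.coeff_mul]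
    exact Ideal.sum_mem I fun ij _ => I.mul_mem_left _ (hf ij.2)

lemma mem_coeffIdeal {I : Ideal A} {f : LaurentSeries A} :
    f ∈ coeffIdeal I ↔ ∀ k, f.coeff k ∈ I := Iff.rfl

lemma C_mem_coeffIdeal {I : Ideal A} {c : A} (hc : c ∈ I) : HahnSeries.C c ∈ coeffIdeal I := by
  intro k
  rw [HahnSeries.C_apply, HahnSeries.coeff_single]
  split <;> simp [hc]


lemma finsum_coeff {ι : Type*} (s : Finset ι) (f : ι → LaurentSeries A) (k : ℤ) :
    (∑ i ∈ s, f i).coeff k = ∑ i ∈ s, (f i).coeff k :=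
  map_sum (HahnSeries.coeff.addMonoidHom k) f s

/-- support in nonnegative degrees -/
def NN (f : LaurentSeries A) : Prop := ∀ k : ℤ, k < 0 → f.coeff k = 0

lemma NN.add {f g : LaurentSeries A} (hf : NN f) (hg : NN g) : NN (f + g) := fun k hk => by
  rw [HahnSeries.coeff_add, hf k hk, hg k hk, add_zero]

lemma NN.sub {f g : LaurentSeries A} (hf : NN f) (hg : NN g) : NN (f - g) := fun k hk => by
  rw [HahnSeries.coeff_sub, hf k hk, hg k hk, sub_zero]

lemma NN.mul {f g : LaurentSeries A} (hf : NN f) (hg : NN g) : NN (f * g) := by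
  intro k hk
  rw [HahnSeries.coeff_mul]
  apply Finset.sum_eq_zero
  intro ij hij
  rw [Finset.mem_addAntidiagonal] at hij
  rcases lt_or_ge ij.1 0 with h1 | h1
  · rw [hf ij.1 h1, zero_mul]
  · rcases lt_or_ge ij.2 0 with h2 | h2
    · rw [hg ij.2 h2, mul_zero]
    · exfalso; omega

lemma NN.C (c : A) : NN (HahnSeries.C c : LaurentSeries A) := fun k hk => by
  rw [HahnSeries.C_apply, HahnSeries.coeff_single_of_ne (by omega)]

lemma NN.one : NN (1 : LaurentSeries A) := by
  have h : (1 : LaurentSeries A) = HahnSeries.C 1 := by rw [map_one]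
  rw [h]; exact NN.C 1

lemma NN.ZsubC (c : A) : NN (Zl A - HahnSeries.C c) := by
  intro k hk
  rw [HahnSeries.coeff_sub, HahnSeries.C_apply, HahnSeries.coeff_single_of_ne (by omega),
    HahnSeries.coeff_single_of_ne (by omega), sub_zero]

lemma NN.ofPS (x : PowerSeries A) : NN (HahnSeries.ofPowerSeries ℤ A x) := by
  intro k hk
  rw [HahnSeries.ofPowerSeries_apply]
  apply HahnSeries.embDomain_notin_range
  rintro ⟨m, hm⟩
  have : ((m : ℤ)) = k := hm
  omega

lemma NN.exists_ofPS {f : LaurentSeries A} (hf : NN f) :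
    ∃ x : PowerSeries A, HahnSeries.ofPowerSeries ℤ A x = f := by
  refine ⟨PowerSeries.mk fun m => f.coeff m, ?_⟩
  ext k
  rcases le_or_gt 0 k with hk | hk
  · lift k to ℕ using hk
    rw [HahnSeries.ofPowerSeries_apply_coeff, PowerSeries.coeff_mk]
  · rw [NN.ofPS _ k hk, hf k hk]

variable (ζ : A) (N : ℕ)

/-- Evaluation at `ζ` (nilpotent, `ζ^N = 0`) of a Laurent series. -/
def Fev (f : LaurentSeries A) : A := ∑ j ∈ range N, ζ ^ j * f.coeff j

variable {ζ N}

lemma Fev_C (hN : 0 < N) (c : A) : Fev ζ N (HahnSeries.C c) = c := by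
  rw [Fev, Finset.sum_eq_single 0]
  · simp
  · intro j _ hj
    rw [HahnSeries.C_apply, HahnSeries.coeff_single_of_ne (by exact_mod_cast hj), mul_zero]
  · intro hj; exact absurd (Finset.mem_range.2 hN) hj

lemma Fev_add (f g : LaurentSeries A) : Fev ζ N (f + g) = Fev ζ N f + Fev ζ N g := by
  rw [Fev, Fev, Fev, ← Finset.sum_add_distrib]
  exact Finset.sum_congr rfl fun j _ => by rw [HahnSeries.coeff_add]; ring

lemma Fev_sub (f g : LaurentSeries A) : Fev ζ N (f - g) = Fev ζ N f - Fev ζ N g := by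
  rw [Fev, Fev, Fev, ← Finset.sum_sub_distrib]
  exact Finset.sum_congr rfl fun j _ => by rw [HahnSeries.coeff_sub]; ring

lemma Fev_Cmul (c : A) (f : LaurentSeries A) : Fev ζ N (HahnSeries.C c * f) = c * Fev ζ N f := by
  rw [Fev, Fev, Finset.mul_sum]
  exact Finset.sum_congr rfl fun j _ => by rw [C_mul_coeff]; ring

lemma Fev_mem {I : Ideal A} {f : LaurentSeries A} (hf : f ∈ coeffIdeal I) : Fev ζ N f ∈ I :=
  Ideal.sum_mem I fun j _ => I.mul_mem_left _ (hf j)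

/-- division with remainder by `z - ζ`. -/
lemma Fev_div (hζN : ζ ^ N = 0) (hN : 0 < N) {f : LaurentSeries A} (hf : NN f) :
    ∃ w : LaurentSeries A, NN w ∧
      f = HahnSeries.C (Fev ζ N f) + (Zl A - HahnSeries.C ζ) * w := by
  set g : LaurentSeries A := f - HahnSeries.C (Fev ζ N f) with hg
  have hgNN : NN g := hf.sub (NN.C _)
  have hdiv : (Zl A - HahnSeries.C ζ) * (g * vinv ζ N) = g := by
    rw [← mul_assoc, mul_comm (Zl A - HahnSeries.C ζ) g, mul_assoc,
      ZsubC_mul_vinv ζ hζN, mul_one]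
  refine ⟨g * vinv ζ N, ?_, ?_⟩
  · set w := g * vinv ζ N with hw
    have hrel : ∀ k : ℤ, w.coeff (k - 1) = g.coeff k + ζ * w.coeff k := by
      intro k
      have h2 : ((Zl A - HahnSeries.C ζ) * w).coeff k = g.coeff k := by rw [hdiv]
      rw [sub_mul, HahnSeries.coeff_sub, Zl_mul_coeff, C_mul_coeff] at h2
      linear_combination h2
    have hm1 : w.coeff (-1) = 0 := by
      have h3 : w.coeff (-1) = ∑ j ∈ range N, g.coeff j * ζ ^ j := by
        rw [hw, vinv, Finset.mul_sum, finsum_coeff]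
        refine Finset.sum_congr rfl fun j _ => ?_
        rw [mul_single_coeff' g (-(j+1)) (ζ^j) (-1)]
        congr 2
        push_cast; ring
      have h4 : ∑ j ∈ range N, g.coeff j * ζ ^ j = Fev ζ N g := by
        rw [Fev]; exact Finset.sum_congr rfl fun j _ => by ring
      rw [h3, h4, hg, Fev_sub, Fev_C hN (Fev ζ N f), sub_self]
    have key : ∀ m : ℕ, w.coeff (-1 - m) = 0 := by
      intro m
      induction m with
      | zero => simpa using hm1
      | succ m ih =>
          have h5 := hrel (-1 - m)
          have e : (-1 : ℤ) - m - 1 = -1 - ((m : ℤ) + 1) := by ring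
          rw [e] at h5
          have e2 : ((-1 : ℤ) - ((m + 1 : ℕ) : ℤ)) = -1 - ((m : ℤ) + 1) := by push_cast; ring
          rw [e2, h5, ih, hgNN _ (by omega), mul_zero, add_zero]
    intro k hk
    have e3 : k = -1 - ((-1 - k).toNat : ℤ) := by omega
    rw [e3]
    exact key (-1 - k).toNat
  · rw [hdiv, hg]; ring

lemma Fev_ZsubC_mul (hζN : ζ ^ N = 0) {r : LaurentSeries A} (hr : NN r) :
    Fev ζ N ((Zl A - HahnSeries.C ζ) * r) = 0 := by
  have hterm : ∀ j : ℕ, ζ ^ j * ((Zl A - HahnSeries.C ζ) * r).coeff j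
      = (fun j : ℕ => ζ ^ j * r.coeff ((j : ℤ) - 1)) j
        - (fun j : ℕ => ζ ^ j * r.coeff ((j : ℤ) - 1)) (j + 1) := by
    intro j
    have h1 : ((Zl A - HahnSeries.C ζ) * r).coeff j = r.coeff ((j : ℤ) - 1) - ζ * r.coeff j := by
      rw [sub_mul, HahnSeries.coeff_sub, Zl_mul_coeff, C_mul_coeff]
    rw [h1]
    simp only
    have e : ((j + 1 : ℕ) : ℤ) - 1 = (j : ℤ) := by push_cast; ring
    rw [e, pow_succ]
    ring
  rw [Fev, Finset.sum_congr rfl fun j _ => hterm j, Finset.sum_range_sub' _ N]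
  rw [show ((0:ℕ):ℤ) - 1 = -1 by norm_num, hr (-1) (by norm_num), hζN]
  ring

lemma Fev_mul (hζN : ζ ^ N = 0) (hN : 0 < N) {f g : LaurentSeries A} (hf : NN f) (hg : NN g) :
    Fev ζ N (f * g) = Fev ζ N f * Fev ζ N g := by
  obtain ⟨wf, hwf, hfe⟩ := Fev_div hζN hN hf
  obtain ⟨wg, hwg, hge⟩ := Fev_div hζN hN hg
  have hexp : f * g = HahnSeries.C (Fev ζ N f * Fev ζ N g)
      + (Zl A - HahnSeries.C ζ) * (HahnSeries.C (Fev ζ N f) * wg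
        + wf * HahnSeries.C (Fev ζ N g) + (Zl A - HahnSeries.C ζ) * (wf * wg)) := by
    rw [map_mul]
    calc f * g = (HahnSeries.C (Fev ζ N f) + (Zl A - HahnSeries.C ζ) * wf)
        * (HahnSeries.C (Fev ζ N g) + (Zl A - HahnSeries.C ζ) * wg) := by rw [← hfe, ← hge]
      _ = _ := by ring
  have hNN2 : NN (HahnSeries.C (Fev ζ N f) * wg + wf * HahnSeries.C (Fev ζ N g)
      + (Zl A - HahnSeries.C ζ) * (wf * wg)) :=
    (((NN.C _).mul hwg).add (hwf.mul (NN.C _))).add ((NN.ZsubC _).mul (hwf.mul hwg))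
  rw [hexp, Fev_add, Fev_C hN, Fev_ZsubC_mul hζN hNN2, add_zero]


lemma NN.neg {f : LaurentSeries A} (hf : NN f) : NN (-f) := fun k hk => by
  rw [HahnSeries.coeff_neg, hf k hk, neg_zero]

lemma rinv_eq_of_two_sided {R : Type*} [MonoidWithZero R] {a b : R}
    (h1 : a * b = 1) (h2 : b * a = 1) : Ring.inverse a = b := by
  have hu : IsUnit a := ⟨⟨a, b, h1, h2⟩, rfl⟩
  calc Ring.inverse a = Ring.inverse a * (a * b) := by rw [h1, mul_one]
    _ = (Ring.inverse a * a) * b := by rw [mul_assoc]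
    _ = b := by rw [Ring.inverse_mul_cancel _ hu, one_mul]

lemma tri_mul_tri {R : Type*} [CommRing R] {a ia : R} (b : R) (h : a * ia = 1) :
    (!![a, 0; b, 1] : Matrix (Fin 2) (Fin 2) R) * !![ia, 0; -(b * ia), 1] = 1 ∧
      (!![ia, 0; -(b * ia), 1] : Matrix (Fin 2) (Fin 2) R) * !![a, 0; b, 1] = 1 := by
  constructor <;>
  · ext i j
    fin_cases i <;> fin_cases j <;>
      simp [Matrix.mul_apply, Fin.sum_univ_two, Matrix.one_apply] <;>
      first
        | linear_combination h
        | linear_combination b * h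
        | linear_combination -b * h
        | ring
lemma map_fin_two {R S : Type*} [CommRing R] [CommRing S] (f : R →+* S) (a b c d : R) :
    (!![a, b; c, d] : Matrix (Fin 2) (Fin 2) R).map f = !![f a, f b; f c, f d] := by
  ext i j
  fin_cases i <;> fin_cases j <;> simp [Matrix.map_apply]

lemma fin_two_ext {R : Type*} {a b c d a' b' c' d' : R} (h1 : a = a') (h2 : b = b')
    (h3 : c = c') (h4 : d = d') :
    (!![a, b; c, d] : Matrix (Fin 2) (Fin 2) R) = !![a', b'; c', d'] := by
  subst h1 h2 h3 h4; rfl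

lemma diag_fin_two {R : Type*} [CommRing R] (a b : R) :
    Matrix.diagonal ![a, b] = !![a, 0; 0, b] := by
  ext i j
  fin_cases i <;> fin_cases j <;> simp [Matrix.diagonal]

section Sigma

variable {q : ℕ} (σ : LaurentSeries A →+* LaurentSeries A)
  (hσ : ∀ (f : LaurentSeries A) (k : ℤ), (σ f).coeff k = f.coeff k ^ q) (hq0 : 0 < q)

include hσ hq0

lemma sigma_C (c : A) : σ (HahnSeries.C c) = HahnSeries.C (c ^ q) := by
  ext k
  rw [hσ, HahnSeries.C_apply, HahnSeries.C_apply, HahnSeries.coeff_single,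
    HahnSeries.coeff_single]
  split
  · rfl
  · exact zero_pow (by omega)

lemma sigma_Z : σ (Zl A) = Zl A := by
  ext k
  rw [hσ]
  by_cases hk : k = 1
  · rw [hk, HahnSeries.coeff_single_same, one_pow]
  · rw [HahnSeries.coeff_single_of_ne hk, zero_pow (by omega)]

omit hq0 in
include hσ in
lemma sigma_rinv {x y : LaurentSeries A} (h : x * y = 1) :
    σ (Ring.inverse x) = Ring.inverse (σ x) := by
  rw [rinv_eq h, Eq.symm (rinv_eq (show σ x * σ y = 1 by rw [← map_mul, h, map_one]))]

end Sigma

section Prods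

variable (q : ℕ) (ζ h : A) (n : ℕ)

/-- first-row entry of `eta`. -/
def aS : LaurentSeries A :=
  ∏ i ∈ range n, Zl A * Ring.inverse (Zl A - HahnSeries.C (ζ ^ q ^ i))

/-- second-row entry of `eta`. -/
def bS : LaurentSeries A :=
  -∑ i ∈ range n, HahnSeries.C (h ^ q ^ i) *
    ∏ j ∈ range (i + 1), Ring.inverse (Zl A - HahnSeries.C (ζ ^ q ^ j))

/-- shifted partial product -/
def Psh (i : ℕ) : LaurentSeries A :=
  ∏ j ∈ range i, Ring.inverse (Zl A - HahnSeries.C (ζ ^ q ^ (j + 1)))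

variable {q ζ n}

lemma pow_q_shift (c : A) (i : ℕ) : (c ^ q) ^ q ^ i = c ^ q ^ (i + 1) := by
  rw [← pow_mul, pow_succ']

lemma aS_shift : aS q (ζ ^ q) n
    = ∏ i ∈ range n, Zl A * Ring.inverse (Zl A - HahnSeries.C (ζ ^ q ^ (i + 1))) := by
  rw [aS]
  exact Finset.prod_congr rfl fun i _ => by rw [pow_q_shift]

lemma bS_shift : bS q (ζ ^ q) (h ^ q) n
    = -∑ i ∈ range n, HahnSeries.C (h ^ q ^ (i + 1)) * Psh q ζ (i + 1) := by
  simp only [bS, Psh]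
  congr 1
  refine Finset.sum_congr rfl fun i _ => ?_
  rw [pow_q_shift]
  congr 1
  exact Finset.prod_congr rfl fun j _ => by rw [pow_q_shift]

end Prods

section Keys

variable {q : ℕ} {ζ h : A} {n : ℕ}
  (hinv : ∀ i : ℕ, (Zl A - HahnSeries.C (ζ ^ q ^ i)) * Ring.inverse (Zl A - HahnSeries.C (ζ ^ q ^ i)) = 1)
  (hq0 : 0 < q)

include hinv hq0

lemma key11 : Zl A * aS q (ζ ^ q) n = aS q ζ (n + 1) * (Zl A - HahnSeries.C ζ) := by
  have h0 := hinv 0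
  rw [pow_zero, pow_one] at h0
  rw [aS_shift, aS, Finset.prod_range_succ', pow_zero, pow_one]
  linear_combination (-(Zl A * ∏ i ∈ range n,
    Zl A * Ring.inverse (Zl A - HahnSeries.C (ζ ^ q ^ (i + 1))))) * h0

lemma key11' : Zl A * aS q (ζ ^ q) n
    = aS q ζ n * (Zl A - HahnSeries.C ζ)
      * (Zl A * Ring.inverse (Zl A - HahnSeries.C (ζ ^ q ^ n))) := by
  have hs : aS q ζ (n + 1)
      = aS q ζ n * (Zl A * Ring.inverse (Zl A - HahnSeries.C (ζ ^ q ^ n))) := by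
    rw [aS, aS, Finset.prod_range_succ]
  calc Zl A * aS q (ζ ^ q) n = aS q ζ (n + 1) * (Zl A - HahnSeries.C ζ) := key11 hinv hq0
    _ = aS q ζ n * (Zl A * Ring.inverse (Zl A - HahnSeries.C (ζ ^ q ^ n)))
        * (Zl A - HahnSeries.C ζ) := by rw [hs]
    _ = _ := by ring

lemma bS_mul_ZsubC (h' : A) (m : ℕ) :
    bS q ζ h' m * (Zl A - HahnSeries.C ζ)
      = -∑ i ∈ range m, HahnSeries.C (h' ^ q ^ i) * Psh q ζ i := by
  have h0 := hinv 0
  rw [pow_zero, pow_one] at h0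
  have hsum : (∑ i ∈ range m, HahnSeries.C (h' ^ q ^ i)
        * ∏ j ∈ range (i + 1), Ring.inverse (Zl A - HahnSeries.C (ζ ^ q ^ j)))
        * (Zl A - HahnSeries.C ζ)
      = ∑ i ∈ range m, HahnSeries.C (h' ^ q ^ i) * Psh q ζ i := by
    rw [Finset.sum_mul]
    refine Finset.sum_congr rfl fun i _ => ?_
    rw [Finset.prod_range_succ', pow_zero, pow_one]
    simp only [Psh]
    linear_combination (HahnSeries.C (h' ^ q ^ i)
      * ∏ j ∈ range i, Ring.inverse (Zl A - HahnSeries.C (ζ ^ q ^ (j + 1)))) * h0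
  rw [bS]
  linear_combination -hsum

lemma key21' : bS q (ζ ^ q) (h ^ q) n - bS q ζ h n * (Zl A - HahnSeries.C ζ)
    = HahnSeries.C h - HahnSeries.C (h ^ q ^ n) * Psh q ζ n := by
  rw [bS_shift, bS_mul_ZsubC hinv hq0 h n]
  rw [neg_sub_neg]
  calc (∑ i ∈ range n, HahnSeries.C (h ^ q ^ i) * Psh q ζ i)
        - ∑ i ∈ range n, HahnSeries.C (h ^ q ^ (i + 1)) * Psh q ζ (i + 1)
      = ∑ i ∈ range n, ((fun i => HahnSeries.C (h ^ q ^ i) * Psh q ζ i) i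
          - (fun i => HahnSeries.C (h ^ q ^ i) * Psh q ζ i) (i + 1)) := by
        rw [Finset.sum_sub_distrib]
    _ = HahnSeries.C (h ^ q ^ 0) * Psh q ζ 0 - HahnSeries.C (h ^ q ^ n) * Psh q ζ n :=
        Finset.sum_range_sub' _ n
    _ = _ := by
        simp only [Psh, pow_zero, pow_one, Finset.prod_range_zero, mul_one]

lemma key21 (h' : A) (hpow : ∀ i : ℕ, 1 ≤ i → i ≤ n → h' ^ q ^ i = h ^ q ^ i) :
    bS q (ζ ^ q) (h ^ q) n - bS q ζ h' (n + 1) * (Zl A - HahnSeries.C ζ)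
      = HahnSeries.C h' := by
  rw [bS_shift, bS_mul_ZsubC hinv hq0 h' (n + 1), neg_sub_neg]
  rw [show (∑ i ∈ range (n + 1), HahnSeries.C (h' ^ q ^ i) * Psh q ζ i)
      = (∑ i ∈ range n, HahnSeries.C (h' ^ q ^ (i + 1)) * Psh q ζ (i + 1))
        + HahnSeries.C (h' ^ q ^ 0) * Psh q ζ 0 from Finset.sum_range_succ' _ n]
  have hre : (∑ i ∈ range n, HahnSeries.C (h' ^ q ^ (i + 1)) * Psh q ζ (i + 1))
      = ∑ i ∈ range n, HahnSeries.C (h ^ q ^ (i + 1)) * Psh q ζ (i + 1) :=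
    Finset.sum_congr rfl fun i hi => by
      rw [hpow (i + 1) (by omega) (Nat.succ_le_of_lt (Finset.mem_range.1 hi))]
  rw [hre]
  simp only [Psh, pow_zero, pow_one, Finset.prod_range_zero, mul_one]
  ring


omit hq0 in
lemma aS_isUnit : ∀ m : ℕ, IsUnit (aS q ζ m) := by
  intro m
  induction m with
  | zero => rw [aS, Finset.prod_range_zero]; exact isUnit_one
  | succ m ih =>
      rw [aS, Finset.prod_range_succ, ← aS]
      exact ih.mul (isUnit_Zl.mul
        (IsUnit.of_mul_eq_one _ (by rw [mul_comm]; exact hinv m)))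

end Keys

end

end Stmt7Aux

namespace Stmt7Aux

lemma eta_eq {A : Type*} [CommRing A] (q : ℕ) (ζ h : A) (n : ℕ) :
    eta q ζ h n = !![aS q ζ n, 0; bS q ζ h n, 1] := rfl

end Stmt7Aux

open Stmt7Aux HahnSeries Finset in
set_option maxHeartbeats 3000000 in
set_option synthInstance.maxHeartbeats 400000 in
/-- the induction step of the key lemma: Let `q = p^e` be a prime power,
`A` a commutative ring containing `𝔽_q`, `n ≥ 1`, `J ⊆ A` an ideal with `J^{q^{n+1}} = 0`
and `ζ, h ∈ J`. Suppose `η ∈ GL₂(A((z)))` is such that `τ := η⁻¹·diag(z,1)·σ(η)` has all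
entries in `A[[z]]`, `det τ = (z − ζ)·u` for a unit `u` of `A[[z]]`, and every coefficient of
every entry of `η⁻¹ − η_{n,h}⁻¹` lies in `J^{q^n}`. Then there are `ht ∈ J` with
`ht − h ∈ J^{q^n}` and `g ∈ GL₂(A[[z]])` with `η = η_{n+1,ht} · g`. -/
theorem stmt_7 {p e q : ℕ} [Fact p.Prime] (hq : q = p ^ e) (he : 0 < e)
    {A : Type*} [CommRing A] [Algebra (GaloisField p e) A]
    (σ : LaurentSeries A →+* LaurentSeries A)
    (hσ : ∀ (f : LaurentSeries A) (k : ℤ), (σ f).coeff k = f.coeff k ^ q)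
    (n : ℕ) (hn : 1 ≤ n) (J : Ideal A) (hJ : J ^ q ^ (n + 1) = ⊥)
    (ζ h : A) (hζ : ζ ∈ J) (hh : h ∈ J)
    (η : (Matrix (Fin 2) (Fin 2) (LaurentSeries A))ˣ)
    (τ : Matrix (Fin 2) (Fin 2) (LaurentSeries A))
    (hτ : τ = (↑η⁻¹ : Matrix (Fin 2) (Fin 2) (LaurentSeries A)) *
        Matrix.diagonal ![(HahnSeries.single (1 : ℤ) (1 : A) : LaurentSeries A), 1] *
        ((↑η : Matrix (Fin 2) (Fin 2) (LaurentSeries A)).map ⇑σ))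
    (hint : ∀ (i j : Fin 2) (k : ℤ), k < 0 → (τ i j).coeff k = 0)
    (hdet : ∃ u : (PowerSeries A)ˣ,
      τ.det = ((HahnSeries.single (1 : ℤ) (1 : A) : LaurentSeries A) - HahnSeries.C ζ) *
        HahnSeries.ofPowerSeries ℤ A ↑u)
    (hcong : ∀ (i j : Fin 2) (k : ℤ),
      (((↑η⁻¹ : Matrix (Fin 2) (Fin 2) (LaurentSeries A)) - Ring.inverse (eta q ζ h n)) i j).coeff k
        ∈ J ^ q ^ n) :
    ∃ ht ∈ J, ht - h ∈ J ^ q ^ n ∧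
      ∃ g : (Matrix (Fin 2) (Fin 2) (PowerSeries A))ˣ,
        (↑η : Matrix (Fin 2) (Fin 2) (LaurentSeries A)) =
          eta q ζ ht (n + 1) *
            (↑g : Matrix (Fin 2) (Fin 2) (PowerSeries A)).map ⇑(HahnSeries.ofPowerSeries ℤ A) := by
  classical
  obtain ⟨u, hu⟩ := hdet
  have hp2 : 2 ≤ p := (Fact.out : p.Prime).two_le
  have hq2 : 2 ≤ q := by
    calc 2 ≤ p := hp2
      _ = p ^ 1 := (pow_one p).symm
      _ ≤ p ^ e := Nat.pow_le_pow_right (by omega) he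
      _ = q := hq.symm
  have hq0 : 0 < q := by omega
  rcases subsingleton_or_nontrivial A with hA | hA
  · haveI : Subsingleton (LaurentSeries A) :=
      ⟨fun f g => by ext k; exact Subsingleton.elim _ _⟩
    haveI : Subsingleton (Matrix (Fin 2) (Fin 2) (LaurentSeries A)) :=
      ⟨fun M N => by ext i j; exact Subsingleton.elim _ _⟩
    refine ⟨0, J.zero_mem, ?_, 1, Subsingleton.elim _ _⟩
    rw [Subsingleton.elim ((0 : A) - h) 0]
    exact Ideal.zero_mem _
  haveI hcp : CharP A p :=
    charP_of_injective_algebraMap (algebraMap (GaloisField p e) A).injective p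
  haveI hec : ExpChar A p := ExpChar.prime Fact.out
  -- notation
  rw [show (HahnSeries.single (1 : ℤ) (1 : A) : LaurentSeries A) = Zl A from rfl] at hτ hu
  -- basic nilpotency
  have hN0 : 0 < q ^ (n + 1) := pow_pos hq0 _
  have hnil : ∀ c, c ∈ J → c ^ q ^ (n + 1) = 0 := by
    intro c hc
    have h1 : c ^ q ^ (n + 1) ∈ J ^ q ^ (n + 1) := Ideal.pow_mem_pow hc _
    rw [hJ] at h1
    exact h1
  have hζN : ζ ^ q ^ (n + 1) = 0 := hnil ζ hζ
  have hEbot : (J ^ q ^ n) ^ q = ⊥ := by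
    rw [← pow_mul, ← pow_succ]
    exact hJ
  have hEq : ∀ c, c ∈ J ^ q ^ n → c ^ q = 0 := by
    intro c hc
    have h1 : c ^ q ∈ (J ^ q ^ n) ^ q := Ideal.pow_mem_pow hc q
    rw [hEbot] at h1
    exact h1
  have hEJ : J ^ q ^ n ≤ J := Ideal.pow_le_self (pow_pos hq0 n).ne'
  have hζiN : ∀ i : ℕ, (ζ ^ q ^ i) ^ q ^ (n + 1) = 0 := by
    intro i
    rw [← pow_mul, mul_comm, pow_mul, hζN, zero_pow (pow_pos hq0 i).ne']
  have hinv : ∀ i : ℕ, (Zl A - HahnSeries.C (ζ ^ q ^ i)) *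
      Ring.inverse (Zl A - HahnSeries.C (ζ ^ q ^ i)) = 1 :=
    fun i => ZsubC_mul_rinv _ (hζiN i)
  have hZCunit : IsUnit (Zl A - HahnSeries.C ζ) := isUnit_ZsubC ζ hζN
  have hZCinv : (Zl A - HahnSeries.C ζ) * Ring.inverse (Zl A - HahnSeries.C ζ) = 1 :=
    ZsubC_mul_rinv ζ hζN
  -- the explicit inverse of eta q ζ h n
  have ha0u : IsUnit (aS q ζ n) := aS_isUnit hinv n
  have hK0 := tri_mul_tri (R := LaurentSeries A) (bS q ζ h n)
    (Ring.mul_inverse_cancel _ ha0u)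
  have hetainv : Ring.inverse (eta q ζ h n)
      = !![Ring.inverse (aS q ζ n), 0; -(bS q ζ h n * Ring.inverse (aS q ζ n)), 1] := by
    rw [eta_eq]
    exact rinv_eq_of_two_sided hK0.1 hK0.2
  set K0 : Matrix (Fin 2) (Fin 2) (LaurentSeries A) := !![Ring.inverse (aS q ζ n), 0; -(bS q ζ h n * Ring.inverse (aS q ζ n)), 1]
    with hK0def
  have hΔ : ∀ i j, ((↑η⁻¹ : Matrix (Fin 2) (Fin 2) (LaurentSeries A)) - K0) i j ∈ coeffIdeal (J ^ q ^ n) := by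
    intro i j k
    have h1 := hcong i j k
    rwa [hetainv] at h1
  have hηeta : ∀ i j, ((↑η : Matrix (Fin 2) (Fin 2) (LaurentSeries A)) - eta q ζ h n) i j ∈ coeffIdeal (J ^ q ^ n) := by
    have hfact : (↑η : Matrix (Fin 2) (Fin 2) (LaurentSeries A)) - eta q ζ h n
        = (↑η : Matrix (Fin 2) (Fin 2) (LaurentSeries A)) * ((K0 - (↑η⁻¹ : Matrix (Fin 2) (Fin 2) (LaurentSeries A))) * eta q ζ h n) := by
      have h1 : (K0 : Matrix (Fin 2) (Fin 2) (LaurentSeries A)) * eta q ζ h n = 1 := by rw [eta_eq]; exact hK0.2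
      rw [sub_mul, h1, mul_sub, mul_one, ← mul_assoc, Units.mul_inv, one_mul]
    intro i j
    rw [hfact]
    rw [Matrix.mul_apply]
    refine Ideal.sum_mem _ fun k _ => Ideal.mul_mem_left _ _ ?_
    rw [Matrix.mul_apply]
    refine Ideal.sum_mem _ fun l _ => Ideal.mul_mem_right _ _ ?_
    have h2 : (K0 - (↑η⁻¹ : Matrix (Fin 2) (Fin 2) (LaurentSeries A))) k l = -(((↑η⁻¹ : Matrix (Fin 2) (Fin 2) (LaurentSeries A)) - K0) k l) := by
      rw [Matrix.sub_apply, Matrix.sub_apply]; ring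
    rw [h2]
    exact neg_mem (hΔ k l)
  -- σ of η equals σ of eta
  have hσeq : ∀ i j, σ ((↑η : Matrix (Fin 2) (Fin 2) (LaurentSeries A)) i j) = σ (eta q ζ h n i j) := by
    intro i j
    have hz : σ ((↑η : Matrix (Fin 2) (Fin 2) (LaurentSeries A)) i j - eta q ζ h n i j) = 0 := by
      ext k
      rw [hσ, HahnSeries.coeff_zero]
      have h3 : ((↑η : Matrix (Fin 2) (Fin 2) (LaurentSeries A)) i j - eta q ζ h n i j).coeff k ∈ J ^ q ^ n := by
        have := hηeta i j
        rw [mem_coeffIdeal] at this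
        have h4 := this k
        rwa [Matrix.sub_apply] at h4
      exact hEq _ h3
    rw [map_sub] at hz
    exact sub_eq_zero.mp hz
  have hσa : σ (aS q ζ n) = aS q (ζ ^ q) n := by
    rw [aS, map_prod, aS_shift]
    refine Finset.prod_congr rfl fun i _ => ?_
    rw [map_mul, sigma_Z σ hσ hq0, sigma_rinv σ hσ (hinv i), map_sub, sigma_C σ hσ hq0,
      sigma_Z σ hσ hq0, ← pow_mul, ← pow_succ]
  have hσb : σ (bS q ζ h n) = bS q (ζ ^ q) (h ^ q) n := by
    rw [bS, map_neg, map_sum, bS_shift, neg_inj]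
    refine Finset.sum_congr rfl fun i _ => ?_
    rw [map_mul, sigma_C σ hσ hq0, ← pow_mul, ← pow_succ, map_prod]
    simp only [Psh]
    congr 1
    refine Finset.prod_congr rfl fun j _ => ?_
    rw [sigma_rinv σ hσ (hinv j), map_sub, sigma_C σ hσ hq0, sigma_Z σ hσ hq0, ← pow_mul,
      ← pow_succ]
  have hmapeq : (↑η : Matrix (Fin 2) (Fin 2) (LaurentSeries A)).map ⇑σ = !![aS q (ζ ^ q) n, 0; bS q (ζ ^ q) (h ^ q) n, 1] := by
    have h1 : (↑η : Matrix (Fin 2) (Fin 2) (LaurentSeries A)).map ⇑σ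
        = (eta q ζ h n).map ⇑σ := by
      apply Matrix.ext
      intro i j
      rw [Matrix.map_apply, Matrix.map_apply]
      exact hσeq i j
    rw [h1, eta_eq, map_fin_two σ, map_zero, map_one, hσa, hσb]
  set Dσ : Matrix (Fin 2) (Fin 2) (LaurentSeries A) := !![Zl A * aS q (ζ ^ q) n, 0; bS q (ζ ^ q) (h ^ q) n, 1] with hDσdef
  have hτeq : τ = (↑η⁻¹ : Matrix (Fin 2) (Fin 2) (LaurentSeries A)) * Dσ := by
    rw [hτ, diag_fin_two, Matrix.mul_assoc, hmapeq, hDσdef]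
    congr 1
    apply Matrix.ext
    intro i j
    fin_cases i <;> fin_cases j <;>
      simp [Matrix.mul_apply, Fin.sum_univ_two]
  have hτdiff : ∀ i j, (τ - K0 * Dσ) i j ∈ coeffIdeal (J ^ q ^ n) := by
    have h1 : τ - K0 * Dσ = ((↑η⁻¹ : Matrix (Fin 2) (Fin 2) (LaurentSeries A)) - K0) * Dσ := by
      rw [hτeq, sub_mul]
    intro i j
    rw [h1, Matrix.mul_apply]
    exact Ideal.sum_mem _ fun k _ => Ideal.mul_mem_right _ _ (hΔ i k)
  have hK0Dσ : K0 * Dσ = !![Ring.inverse (aS q ζ n) * (Zl A * aS q (ζ ^ q) n), 0;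
      bS q (ζ ^ q) (h ^ q) n - bS q ζ h n
        * (Ring.inverse (aS q ζ n) * (Zl A * aS q (ζ ^ q) n)), 1] := by
    rw [hK0def, hDσdef]
    apply Matrix.ext
    intro i j
    fin_cases i <;> fin_cases j <;>
      simp [Matrix.mul_apply, Fin.sum_univ_two] <;> ring
  -- Fact A
  have hFactA : τ 1 1 - 1 ∈ coeffIdeal (J ^ q ^ n) := by
    have h1 : τ 1 1 - 1 = (τ - K0 * Dσ) 1 1 := by
      rw [Matrix.sub_apply, hK0Dσ]
      norm_num
    rw [h1]
    exact hτdiff 1 1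
  -- Fact B
  have hXE : Ring.inverse (aS q ζ n) * (Zl A * aS q (ζ ^ q) n) - (Zl A - HahnSeries.C ζ)
      ∈ coeffIdeal (J ^ q ^ n) := by
    have hX : Ring.inverse (aS q ζ n) * (Zl A * aS q (ζ ^ q) n)
        = (Zl A - HahnSeries.C ζ)
          * (Zl A * Ring.inverse (Zl A - HahnSeries.C (ζ ^ q ^ n))) := by
      rw [key11' hinv hq0]
      rw [show aS q ζ n * (Zl A - HahnSeries.C ζ)
            * (Zl A * Ring.inverse (Zl A - HahnSeries.C (ζ ^ q ^ n)))
          = aS q ζ n * ((Zl A - HahnSeries.C ζ)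
            * (Zl A * Ring.inverse (Zl A - HahnSeries.C (ζ ^ q ^ n)))) from by ring,
        ← mul_assoc, Ring.inverse_mul_cancel _ ha0u, one_mul]
    rw [hX]
    have h2 : (Zl A - HahnSeries.C ζ) * (Zl A * Ring.inverse (Zl A - HahnSeries.C (ζ ^ q ^ n)))
        - (Zl A - HahnSeries.C ζ)
        = (Zl A - HahnSeries.C ζ)
          * (HahnSeries.C (ζ ^ q ^ n) * Ring.inverse (Zl A - HahnSeries.C (ζ ^ q ^ n))) := by
      linear_combination (Zl A - HahnSeries.C ζ) * (hinv n)
    rw [h2]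
    exact Ideal.mul_mem_left _ _ (Ideal.mul_mem_right _ _
      (C_mem_coeffIdeal (Ideal.pow_mem_pow hζ (q ^ n))))
  have hFactB : τ 1 0 - HahnSeries.C h ∈ coeffIdeal (J ^ q ^ n) := by
    have hkey := key21' (h := h) (n := n) hinv hq0
    have h1 : τ 1 0 - HahnSeries.C h
        = (τ - K0 * Dσ) 1 0
          + ((bS q (ζ ^ q) (h ^ q) n - bS q ζ h n * (Zl A - HahnSeries.C ζ))
            - HahnSeries.C h)
          - bS q ζ h n * (Ring.inverse (aS q ζ n) * (Zl A * aS q (ζ ^ q) n)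
            - (Zl A - HahnSeries.C ζ)) := by
      rw [Matrix.sub_apply, hK0Dσ]
      norm_num
      ring
    rw [h1, hkey]
    refine sub_mem (add_mem (hτdiff 1 0) ?_) (Ideal.mul_mem_left _ _ hXE)
    rw [show HahnSeries.C h - HahnSeries.C (h ^ q ^ n) * Psh q ζ n - HahnSeries.C h
        = -(HahnSeries.C (h ^ q ^ n) * Psh q ζ n) from by ring]
    exact neg_mem (Ideal.mul_mem_right _ _ (C_mem_coeffIdeal (Ideal.pow_mem_pow hh (q ^ n))))
  -- evaluation at ζ
  have hNNτ : ∀ i j, NN (τ i j) := fun i j k hk => hint i j k hk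
  have hFev1 : Fev ζ (q ^ (n + 1)) (1 : LaurentSeries A) = 1 := by
    rw [show (1 : LaurentSeries A) = HahnSeries.C 1 from (map_one _).symm, Fev_C hN0]
  have hj1 : Fev ζ (q ^ (n + 1)) (τ 1 1) - 1 ∈ J ^ q ^ n := by
    have h1 : Fev ζ (q ^ (n + 1)) (τ 1 1) - 1 = Fev ζ (q ^ (n + 1)) (τ 1 1 - 1) := by
      rw [Fev_sub, hFev1]
    rw [h1]
    exact Fev_mem (ζ := ζ) (N := q ^ (n + 1)) hFactA
  have hue2 : IsUnit (Fev ζ (q ^ (n + 1)) (τ 1 1)) := by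
    have h1 : IsNilpotent (Fev ζ (q ^ (n + 1)) (τ 1 1) - 1) :=
      ⟨q ^ (n + 1), hnil _ (hEJ hj1)⟩
    have h2 := h1.isUnit_one_add
    rwa [show (1 : A) + (Fev ζ (q ^ (n + 1)) (τ 1 1) - 1)
      = Fev ζ (q ^ (n + 1)) (τ 1 1) from by ring] at h2
  obtain ⟨v, hv⟩ := hue2.exists_right_inv
  set e2 := Fev ζ (q ^ (n + 1)) (τ 1 1) with he2
  set ht := Fev ζ (q ^ (n + 1)) (τ 1 0) * v with hhtdef
  have hd : Fev ζ (q ^ (n + 1)) (τ 1 0) - h ∈ J ^ q ^ n := by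
    have h1 := Fev_mem (ζ := ζ) (N := q ^ (n + 1)) hFactB
    rwa [Fev_sub, Fev_C hN0] at h1
  have hv1 : v - 1 ∈ J ^ q ^ n := by
    have h1 : v - 1 = -(v * (e2 - 1)) := by linear_combination hv
    rw [h1]
    exact neg_mem (Ideal.mul_mem_left _ _ hj1)
  have hhtmh : ht - h ∈ J ^ q ^ n := by
    have h1 : ht - h = (Fev ζ (q ^ (n + 1)) (τ 1 0) - h) * v + h * (v - 1) := by
      rw [hhtdef]; ring
    rw [h1]
    exact add_mem (Ideal.mul_mem_right _ _ hd) (Ideal.mul_mem_left _ _ hv1)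
  have hhtJ : ht ∈ J := by
    have h1 : ht = (ht - h) + h := by ring
    rw [h1]
    exact add_mem (hEJ hhtmh) hh
  have hht_e2 : ht * e2 = Fev ζ (q ^ (n + 1)) (τ 1 0) := by
    rw [hhtdef]
    linear_combination Fev ζ (q ^ (n + 1)) (τ 1 0) * hv
  -- determinant at ζ
  have hFdet : Fev ζ (q ^ (n + 1)) τ.det = 0 := by
    rw [hu]
    exact Fev_ZsubC_mul hζN (NN.ofPS _)
  have hdet2 : Fev ζ (q ^ (n + 1)) (τ 0 0) * Fev ζ (q ^ (n + 1)) (τ 1 1)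
      = Fev ζ (q ^ (n + 1)) (τ 0 1) * Fev ζ (q ^ (n + 1)) (τ 1 0) := by
    have h1 := hFdet
    rw [Matrix.det_fin_two, Fev_sub, Fev_mul hζN hN0 (hNNτ 0 0) (hNNτ 1 1),
      Fev_mul hζN hN0 (hNNτ 0 1) (hNNτ 1 0)] at h1
    linear_combination h1
  have hs0F : Fev ζ (q ^ (n + 1)) (HahnSeries.C ht * τ 1 1 - τ 1 0) = 0 := by
    rw [Fev_sub, Fev_Cmul, ← he2, hht_e2, sub_self]
  have hs1F : Fev ζ (q ^ (n + 1)) (τ 0 0 - HahnSeries.C ht * τ 0 1) = 0 := by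
    rw [Fev_sub, Fev_Cmul]
    have hcanc : (Fev ζ (q ^ (n + 1)) (τ 0 0) - ht * Fev ζ (q ^ (n + 1)) (τ 0 1)) * e2 = 0 := by
      linear_combination hdet2 - Fev ζ (q ^ (n + 1)) (τ 0 1) * hht_e2
    have h3 : Fev ζ (q ^ (n + 1)) (τ 0 0) - ht * Fev ζ (q ^ (n + 1)) (τ 0 1)
        = (Fev ζ (q ^ (n + 1)) (τ 0 0) - ht * Fev ζ (q ^ (n + 1)) (τ 0 1)) * (e2 * v) := by
      rw [hv, mul_one]
    rw [h3, ← mul_assoc, hcanc, zero_mul]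
  -- divisions
  obtain ⟨w0, hw0NN, hw0⟩ := Fev_div hζN hN0
    (((NN.C ht).mul (hNNτ 1 1)).sub (hNNτ 1 0))
  rw [hs0F, map_zero, zero_add] at hw0
  obtain ⟨w1, hw1NN, hw1⟩ := Fev_div hζN hN0
    ((hNNτ 0 0).sub ((NN.C ht).mul (hNNτ 0 1)))
  rw [hs1F, map_zero, zero_add] at hw1
  -- Frobenius powers of ht agree with those of h
  have hq1 : ht ^ q = h ^ q := by
    have hdq : (ht - h) ^ q = 0 := hEq _ hhtmh
    have h1 : ht = h + (ht - h) := by ring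
    rw [h1, hq, add_pow_char_pow, ← hq, hdq, add_zero]
  have hpowi : ∀ i : ℕ, 1 ≤ i → i ≤ n → ht ^ q ^ i = h ^ q ^ i := by
    intro i hi1 _
    obtain ⟨i', rfl⟩ : ∃ i', i = i' + 1 := ⟨i - 1, by omega⟩
    rw [pow_succ', pow_mul, pow_mul, hq1]
  -- the explicit inverse of eta q ζ ht (n+1)
  have ha1u : IsUnit (aS q ζ (n + 1)) := aS_isUnit hinv (n + 1)
  have hK1 := tri_mul_tri (R := LaurentSeries A) (bS q ζ ht (n + 1))
    (Ring.mul_inverse_cancel _ ha1u)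
  set K1 : Matrix (Fin 2) (Fin 2) (LaurentSeries A) :=
    !![Ring.inverse (aS q ζ (n + 1)), 0;
       -(bS q ζ ht (n + 1) * Ring.inverse (aS q ζ (n + 1))), 1] with hK1def
  set G : Matrix (Fin 2) (Fin 2) (LaurentSeries A) :=
    K1 * (↑η : Matrix (Fin 2) (Fin 2) (LaurentSeries A)) with hGdef
  have hητ : (↑η : Matrix (Fin 2) (Fin 2) (LaurentSeries A)) * τ = Dσ := by
    rw [hτeq, ← mul_assoc, Units.mul_inv, one_mul]
  have hGτ : G * τ = !![Zl A - HahnSeries.C ζ, 0; HahnSeries.C ht, 1] := by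
    rw [hGdef, mul_assoc, hητ]
    have hKD : K1 * Dσ = !![Ring.inverse (aS q ζ (n + 1)) * (Zl A * aS q (ζ ^ q) n), 0;
        bS q (ζ ^ q) (h ^ q) n - bS q ζ ht (n + 1)
          * (Ring.inverse (aS q ζ (n + 1)) * (Zl A * aS q (ζ ^ q) n)), 1] := by
      rw [hK1def, hDσdef]
      apply Matrix.ext
      intro i j
      fin_cases i <;> fin_cases j <;>
        simp [Matrix.mul_apply, Fin.sum_univ_two] <;> ring
    rw [hKD]
    have hent : Ring.inverse (aS q ζ (n + 1)) * (Zl A * aS q (ζ ^ q) n)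
        = Zl A - HahnSeries.C ζ := by
      rw [key11 hinv hq0, ← mul_assoc, Ring.inverse_mul_cancel _ ha1u, one_mul]
    rw [hent, key21 hinv hq0 ht hpowi]
  -- adjugate relation
  have hadj : τ.det • G = !![Zl A - HahnSeries.C ζ, 0; HahnSeries.C ht, 1] * τ.adjugate := by
    have h1 : G * (τ.det • (1 : Matrix (Fin 2) (Fin 2) (LaurentSeries A)))
        = τ.det • (G * 1) := Matrix.mul_smul G τ.det 1
    rw [← hGτ, Matrix.mul_assoc, Matrix.mul_adjugate, h1, Matrix.mul_one]
  have hRHS : !![Zl A - HahnSeries.C ζ, 0; HahnSeries.C ht, 1] * τ.adjugate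
      = !![(Zl A - HahnSeries.C ζ) * τ 1 1, (Zl A - HahnSeries.C ζ) * (-(τ 0 1));
          (Zl A - HahnSeries.C ζ) * w0, (Zl A - HahnSeries.C ζ) * w1] := by
    have hτadj : τ.adjugate = !![τ 1 1, -(τ 0 1); -(τ 1 0), τ 0 0] := by
      conv_lhs => rw [Matrix.eta_fin_two τ]
      rw [Matrix.adjugate_fin_two]
      rfl
    rw [hτadj, Matrix.mul_fin_two]
    exact fin_two_ext (by ring) (by ring) (by linear_combination hw0)
      (by linear_combination hw1)
  set U : LaurentSeries A := HahnSeries.ofPowerSeries ℤ A ↑u with hUdef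
  set Ui : LaurentSeries A := HahnSeries.ofPowerSeries ℤ A ↑u⁻¹ with hUidef
  have hUUi : Ui * U = 1 := by rw [hUdef, hUidef, ← map_mul, Units.inv_mul, map_one]
  set W : Matrix (Fin 2) (Fin 2) (LaurentSeries A) := !![τ 1 1, -(τ 0 1); w0, w1] with hWdef
  have hGij : ∀ i j, G i j = Ui * W i j := by
    intro i j
    have h4 := congrFun (congrFun hadj i) j
    rw [hRHS, Matrix.smul_apply, smul_eq_mul] at h4
    have h5 : !![(Zl A - HahnSeries.C ζ) * τ 1 1, (Zl A - HahnSeries.C ζ) * (-(τ 0 1));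
        (Zl A - HahnSeries.C ζ) * w0, (Zl A - HahnSeries.C ζ) * w1] i j
        = (Zl A - HahnSeries.C ζ) * W i j := by
      rw [hWdef]
      fin_cases i <;> fin_cases j <;> rfl
    have h2 : (Zl A - HahnSeries.C ζ) * (U * G i j)
        = (Zl A - HahnSeries.C ζ) * W i j := by
      rw [← h5, ← h4, hu]
      ring
    have h3 : U * G i j = W i j := hZCunit.mul_left_cancel h2
    calc G i j = (Ui * U) * G i j := by rw [hUUi, one_mul]
      _ = Ui * (U * G i j) := by ring
      _ = Ui * W i j := by rw [h3]
  have hWNN : ∀ i j, NN (W i j) := by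
    intro i j
    rw [hWdef]
    fin_cases i <;> fin_cases j
    · exact hNNτ 1 1
    · exact (hNNτ 0 1).neg
    · exact hw0NN
    · exact hw1NN
  have hGNN : ∀ i j, NN (G i j) := fun i j => by
    rw [hGij i j]
    exact (NN.ofPS _).mul (hWNN i j)
  choose gf hgf using fun i j => NN.exists_ofPS (hGNN i j)
  set gps : Matrix (Fin 2) (Fin 2) (PowerSeries A) := Matrix.of gf with hgpsdef
  have hmap : gps.map (⇑(HahnSeries.ofPowerSeries ℤ A)) = G := by
    apply Matrix.ext
    intro i j
    rw [Matrix.map_apply]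
    exact hgf i j
  have h6 : (G * τ).det = Zl A - HahnSeries.C ζ := by
    rw [hGτ, Matrix.det_fin_two]
    norm_num
  have h7 : G.det * U = 1 := by
    rw [Matrix.det_mul, hu] at h6
    have h8 : (Zl A - HahnSeries.C ζ) * (G.det * U)
        = (Zl A - HahnSeries.C ζ) * 1 := by
      rw [mul_one]
      linear_combination h6
    exact hZCunit.mul_left_cancel h8
  have h9 : gps.det * ↑u = 1 := by
    apply HahnSeries.ofPowerSeries_injective (Γ := ℤ) (R := A)
    rw [map_mul, map_one, RingHom.map_det, RingHom.mapMatrix_apply, hmap]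
    exact h7
  have hgu : IsUnit gps := (Matrix.isUnit_iff_isUnit_det gps).mpr (IsUnit.of_mul_eq_one _ h9)
  refine ⟨ht, hhtJ, hhtmh, hgu.unit, ?_⟩
  rw [IsUnit.unit_spec, hmap, hGdef, eta_eq, ← Matrix.mul_assoc, hK1.1, Matrix.one_mul]
end

section
/- Let q be a prime power and 𝔽_q[[ζ]] the formal power series ring, equipped with its coefficientwise (ζ-adic) topology. For every integer k ≥ 1, the family of power series (ζ^{∑_{i∈s} q^i}), indexed by the k-element finite subsets s of ℕ, is summable in 𝔽_q[[ζ]], and the order (the ζ-adic valuation, i.e. the index of the lowest nonzero coefficient) of its sum equals 1 + q + ⋯ + q^{k-1} = (q^k − 1)/(q − 1). -/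
private lemma stmt9_geom_lt {q : ℕ} (hq : 2 ≤ q) (n : ℕ) :
    ∑ i ∈ Finset.range n, q ^ i < q ^ n := by
  induction n with
  | zero => simp
  | succ n ih =>
    rw [Finset.sum_range_succ, pow_succ]
    have h1 : q ^ n * 2 ≤ q ^ n * q := Nat.mul_le_mul_left _ hq
    omega

private lemma stmt9_inj {q : ℕ} (hq : 2 ≤ q) :
    ∀ n (s t : Finset ℕ), ∑ i ∈ s, q ^ i = n → ∑ i ∈ t, q ^ i = n → s = t := by
  have hub : ∀ (u : Finset ℕ) (M : ℕ), (∀ x ∈ u, x ≤ M) → ∑ i ∈ u, q ^ i < q ^ (M + 1) := by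
    intro u M hM
    calc ∑ i ∈ u, q ^ i ≤ ∑ i ∈ Finset.range (M + 1), q ^ i := by
          apply Finset.sum_le_sum_of_subset
          intro x hx
          simp only [Finset.mem_range, Nat.lt_succ_iff]
          exact hM x hx
      _ < q ^ (M + 1) := stmt9_geom_lt hq _
  have hlb : ∀ (u : Finset ℕ) (M : ℕ), M ∈ u → q ^ M ≤ ∑ i ∈ u, q ^ i := by
    intro u M hM
    exact Finset.single_le_sum (f := fun i => q ^ i) (fun i _ => Nat.zero_le _) hM
  intro n
  induction n using Nat.strong_induction_on with
  | _ n ih =>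
    intro s t hs ht
    rcases Finset.eq_empty_or_nonempty s with rfl | hsne
    · simp only [Finset.sum_empty] at hs
      subst hs
      rcases Finset.eq_empty_or_nonempty t with rfl | htne
      · rfl
      · exfalso
        obtain ⟨a, ha⟩ := htne
        have h1 : q ^ a ≤ ∑ i ∈ t, q ^ i := hlb t a ha
        have hqa : 0 < q ^ a := Nat.pow_pos (by omega)
        omega
    rcases Finset.eq_empty_or_nonempty t with rfl | htne
    · exfalso
      simp only [Finset.sum_empty] at ht
      subst ht
      obtain ⟨a, ha⟩ := hsne
      have h1 : q ^ a ≤ ∑ i ∈ s, q ^ i := hlb s a ha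
      have hqa : 0 < q ^ a := Nat.pow_pos (by omega)
      omega
    · obtain ⟨M, hMs, hMmax⟩ : ∃ M, M ∈ s ∧ ∀ x ∈ s, x ≤ M :=
        ⟨s.max' hsne, s.max'_mem hsne, fun x hx => Finset.le_max' s x hx⟩
      obtain ⟨M', hMt, hMmax'⟩ : ∃ M, M ∈ t ∧ ∀ x ∈ t, x ≤ M :=
        ⟨t.max' htne, t.max'_mem htne, fun x hx => Finset.le_max' t x hx⟩
      have hMM : M = M' := by
        by_contra hne
        rcases Nat.lt_or_ge M M' with h | h
        · have h1 := hlb t M' hMt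
          have h2 := hub s M hMmax
          have h3 : q ^ (M + 1) ≤ q ^ M' := Nat.pow_le_pow_right (by omega) (by omega)
          omega
        · have h1 := hlb s M hMs
          have h2 := hub t M' hMmax'
          have h3 : q ^ (M' + 1) ≤ q ^ M := Nat.pow_le_pow_right (by omega) (by omega)
          omega
      subst hMM
      have hse : ∑ i ∈ s.erase M, q ^ i + q ^ M = n := by
        rw [Finset.sum_erase_add s _ hMs]; exact hs
      have hte : ∑ i ∈ t.erase M, q ^ i + q ^ M = n := by
        rw [Finset.sum_erase_add t _ hMt]; exact ht
      have hqM : 0 < q ^ M := Nat.pow_pos (by omega)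
      have hlt : n - q ^ M < n := by
        have := hlb s M hMs
        omega
      have heq := ih (n - q ^ M) hlt (s.erase M) (t.erase M) (by omega) (by omega)
      rw [← Finset.insert_erase hMs, ← Finset.insert_erase hMt, heq]

private lemma stmt9_min {q : ℕ} (hq : 1 ≤ q) :
    ∀ k (s : Finset ℕ), s.card = k → ∑ i ∈ Finset.range k, q ^ i ≤ ∑ i ∈ s, q ^ i := by
  intro k
  induction k with
  | zero => simp
  | succ k ih =>
    intro s hs
    have hsne : s.Nonempty := Finset.card_pos.mp (by omega)
    obtain ⟨M, hMs, hMmax⟩ : ∃ M, M ∈ s ∧ ∀ x ∈ s, x ≤ M :=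
      ⟨s.max' hsne, s.max'_mem hsne, fun x hx => Finset.le_max' s x hx⟩
    have hMk : k ≤ M := by
      have hsub : s ⊆ Finset.range (M + 1) := by
        intro x hx
        simp only [Finset.mem_range, Nat.lt_succ_iff]
        exact hMmax x hx
      have := Finset.card_le_card hsub
      simp only [Finset.card_range] at this
      omega
    have hcard : (s.erase M).card = k := by
      rw [Finset.card_erase_of_mem hMs]; omega
    have h1 := ih (s.erase M) hcard
    have h2 : q ^ k ≤ q ^ M := Nat.pow_le_pow_right hq hMk
    calc ∑ i ∈ Finset.range (k + 1), q ^ i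
        = ∑ i ∈ Finset.range k, q ^ i + q ^ k := Finset.sum_range_succ _ _
      _ ≤ ∑ i ∈ s.erase M, q ^ i + q ^ M := Nat.add_le_add h1 h2
      _ = ∑ i ∈ s, q ^ i := Finset.sum_erase_add s _ hMs

/-- Let `q = p^e` be a prime power and equip `𝔽_q[[ζ]]` with its coefficientwise
topology (coefficients discrete). For every `k ≥ 1` the family `(ζ^{∑_{i∈s} q^i})`, indexed by
the `k`-element finite subsets `s ⊆ ℕ`, is summable, and the order (ζ-adic valuation) of its
sum equals `1 + q + ⋯ + q^{k-1} = (q^k − 1)/(q − 1)`. -/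
theorem stmt_9 {p e q : ℕ} [Fact p.Prime] (hq : q = p ^ e) (he : 0 < e)
    (k : ℕ) (hk : 1 ≤ k) :
    letI : TopologicalSpace (GaloisField p e) := ⊥
    letI : TopologicalSpace (PowerSeries (GaloisField p e)) := Pi.topologicalSpace
    Summable (fun s : {s : Finset ℕ // s.card = k} =>
        (PowerSeries.X : PowerSeries (GaloisField p e)) ^ (∑ i ∈ s.1, q ^ i)) ∧
      PowerSeries.order (∑' s : {s : Finset ℕ // s.card = k},
          (PowerSeries.X : PowerSeries (GaloisField p e)) ^ (∑ i ∈ s.1, q ^ i)) =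
        (∑ i ∈ Finset.range k, q ^ i : ℕ) ∧
      (∑ i ∈ Finset.range k, q ^ i : ℕ) = (q ^ k - 1) / (q - 1) := by
  classical
  letI tF : TopologicalSpace (GaloisField p e) := ⊥
  letI tP : TopologicalSpace (PowerSeries (GaloisField p e)) := Pi.topologicalSpace
  haveI : DiscreteTopology (GaloisField p e) := ⟨rfl⟩
  haveI : T2Space (PowerSeries (GaloisField p e)) :=
    inferInstanceAs (T2Space ((Unit →₀ ℕ) → GaloisField p e))
  show Summable _ ∧ _ ∧ _
  have hq2 : 2 ≤ q := by
    have hp : 2 ≤ p := (Fact.out : p.Prime).two_le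
    have : p ≤ p ^ e := Nat.le_self_pow (by omega) p
    omega
  set n : {s : Finset ℕ // s.card = k} → ℕ := fun s => ∑ i ∈ s.1, q ^ i with hn
  set g : PowerSeries (GaloisField p e) :=
    PowerSeries.mk (fun m => if ∃ s : {s : Finset ℕ // s.card = k}, n s = m
      then (1 : GaloisField p e) else 0) with hgdef
  have key : ∀ (φ : PowerSeries (GaloisField p e)) (d : Unit →₀ ℕ),
      φ d = PowerSeries.coeff (R := GaloisField p e) (d ()) φ := by
    intro φ d
    rw [PowerSeries.coeff, MvPowerSeries.coeff_apply]
    exact congrArg φ (Finsupp.unique_single d)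
  have coords : ∀ d : Unit →₀ ℕ, HasSum (fun s : {s : Finset ℕ // s.card = k} =>
      ((PowerSeries.X : PowerSeries (GaloisField p e)) ^ (∑ i ∈ s.1, q ^ i)) d) (g d) := by
    intro d
    simp only [key]
    by_cases hex : ∃ s : {s : Finset ℕ // s.card = k}, n s = d ()
    · obtain ⟨s0, hs0⟩ := hex
      have hco : PowerSeries.coeff (R := GaloisField p e) (d ()) g = 1 := by
        rw [hgdef, PowerSeries.coeff_mk, if_pos ⟨s0, hs0⟩]
      rw [hco]
      have funeq : (fun s : {s : Finset ℕ // s.card = k} =>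
          PowerSeries.coeff (R := GaloisField p e) (d ())
            ((PowerSeries.X : PowerSeries (GaloisField p e)) ^ (∑ i ∈ s.1, q ^ i)))
          = fun s => if s = s0 then (1 : GaloisField p e) else 0 := by
        funext s
        rw [PowerSeries.coeff_X_pow]
        by_cases h : s = s0
        · subst h
          rw [if_pos rfl, if_pos hs0.symm]
        · rw [if_neg h, if_neg]
          intro habs
          exact h (Subtype.ext (stmt9_inj hq2 (d ()) s.1 s0.1 habs.symm hs0))
      rw [funeq]
      exact hasSum_ite_eq s0 1
    · have hco : PowerSeries.coeff (R := GaloisField p e) (d ()) g = 0 := by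
        rw [hgdef, PowerSeries.coeff_mk, if_neg hex]
      rw [hco]
      have funeq : (fun s : {s : Finset ℕ // s.card = k} =>
          PowerSeries.coeff (R := GaloisField p e) (d ())
            ((PowerSeries.X : PowerSeries (GaloisField p e)) ^ (∑ i ∈ s.1, q ^ i)))
          = fun _ => (0 : GaloisField p e) := by
        funext s
        rw [PowerSeries.coeff_X_pow, if_neg]
        intro habs
        exact hex ⟨s, habs.symm⟩
      rw [funeq]
      exact hasSum_zero
  have hg : HasSum (fun s : {s : Finset ℕ // s.card = k} =>
      (PowerSeries.X : PowerSeries (GaloisField p e)) ^ (∑ i ∈ s.1, q ^ i)) g := by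
    exact (Pi.hasSum (ι := {s : Finset ℕ // s.card = k})
      (X := fun _ : (Unit →₀ ℕ) => GaloisField p e)
      (f := fun s : {s : Finset ℕ // s.card = k} =>
        ((PowerSeries.X : PowerSeries (GaloisField p e)) ^ (∑ i ∈ s.1, q ^ i) :
          PowerSeries (GaloisField p e)))
      (g := g)).mpr coords
  refine ⟨⟨g, hg⟩, ?_, Nat.geomSum_eq hq2 k⟩
  rw [hg.tsum_eq, PowerSeries.order_eq_nat]
  constructor
  · have h1 : PowerSeries.coeff (R := GaloisField p e) (∑ i ∈ Finset.range k, q ^ i) g = 1 := by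
      rw [hgdef, PowerSeries.coeff_mk, if_pos ⟨⟨Finset.range k, Finset.card_range k⟩, rfl⟩]
    rw [h1]
    exact one_ne_zero
  · intro i hi
    rw [hgdef, PowerSeries.coeff_mk, if_neg]
    rintro ⟨s, hs⟩
    have h2 : ∑ i ∈ s.1, q ^ i = i := hs
    have := stmt9_min (by omega : 1 ≤ q) k s.1 s.2
    omega
end

section
/- Let q be a prime power and consider the power series ring 𝔽_q[[ζ]][[w]] with its coefficientwise topology. The family (1 − ζ^{q^i}·w)_{i ≥ 0} is multipliable in 𝔽_q[[ζ]][[w]]; denoting its product by P and by P^σ the image of P under the continuous ring endomorphism of 𝔽_q[[ζ]][[w]] sending ζ to ζ^q and fixing w, one has P = (1 − ζw)·P^σ. -/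
open PowerSeries Finset

variable {A : Type*} [CommRing A]

lemma aux_X_pow_mul (k m : ℕ) (h : m < k) (g : PowerSeries A) :
    PowerSeries.coeff (R := A) m (X ^ k * g) = 0 := by
  rw [PowerSeries.coeff_mul]
  refine Finset.sum_eq_zero fun x hx => ?_
  rw [Finset.HasAntidiagonal.mem_antidiagonal] at hx
  rw [PowerSeries.coeff_X_pow, if_neg (by omega), zero_mul]

lemma aux_step (k d m : ℕ) (h : m < k) (g : PowerSeries (PowerSeries A)) :
    PowerSeries.coeff (R := A) m (PowerSeries.coeff d
      ((1 - PowerSeries.C (X ^ k) * X) * g)) =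
    PowerSeries.coeff (R := A) m (PowerSeries.coeff d g) := by
  rw [sub_mul, one_mul, mul_assoc, map_sub, map_sub, PowerSeries.coeff_C_mul,
    aux_X_pow_mul k m h, sub_zero]

lemma aux_coeff_apply (g : PowerSeries A) (x : Unit →₀ ℕ) :
    g x = PowerSeries.coeff (R := A) (x ()) g := by
  have : x = Finsupp.single () (x ()) := by
    ext; simp
  conv_lhs => rw [this]
  rfl

lemma aux_prod_mul (qq d m : ℕ) (S : Finset ℕ) (hS : ∀ i ∈ S, m < qq ^ i)
    (g : PowerSeries (PowerSeries A)) :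
    PowerSeries.coeff (R := A) m (PowerSeries.coeff d
      ((∏ i ∈ S, (1 - PowerSeries.C (X ^ qq ^ i) * X)) * g)) =
    PowerSeries.coeff (R := A) m (PowerSeries.coeff d g) := by
  classical
  induction S using Finset.induction with
  | empty => simp
  | @insert a S' ha ih =>
    rw [Finset.prod_insert ha, mul_assoc, aux_step _ _ _ (hS a (Finset.mem_insert_self a S')),
      ih (fun i hi => hS i (Finset.mem_insert_of_mem hi))]

lemma aux_stable (qq : ℕ) (hq2 : 2 ≤ qq) (d m : ℕ) (F : Finset ℕ) :
    PowerSeries.coeff (R := A) m (PowerSeries.coeff d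
      (∏ i ∈ F, (1 - PowerSeries.C (X ^ qq ^ i) * X))) =
    PowerSeries.coeff (R := A) m (PowerSeries.coeff d
      (∏ i ∈ F ∩ Finset.range (m + 1), (1 - PowerSeries.C (X ^ qq ^ i) * X))) := by
  classical
  rw [← Finset.prod_sdiff (Finset.inter_subset_left (s₂ := Finset.range (m + 1)))]
  apply aux_prod_mul
  intro i hi
  rw [Finset.mem_sdiff, Finset.mem_inter, Finset.mem_range] at hi
  have hmi : m + 1 ≤ i := by
    by_contra hc
    exact hi.2 ⟨hi.1, by omega⟩
  calc m < 2 ^ m := Nat.lt_two_pow_self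
    _ ≤ 2 ^ i := Nat.pow_le_pow_right (by norm_num) (by omega)
    _ ≤ qq ^ i := Nat.pow_le_pow_left hq2 i

lemma aux_f0 (d m : ℕ) (g₁ g₂ : PowerSeries (PowerSeries A))
    (h1 : PowerSeries.coeff (R := A) m (PowerSeries.coeff d g₁) =
      PowerSeries.coeff (R := A) m (PowerSeries.coeff d g₂))
    (h2 : PowerSeries.coeff (R := A) (m - 1) (PowerSeries.coeff (d - 1) g₁) =
      PowerSeries.coeff (R := A) (m - 1) (PowerSeries.coeff (d - 1) g₂)) :
    PowerSeries.coeff (R := A) m (PowerSeries.coeff d ((1 - PowerSeries.C X * X) * g₁)) =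
    PowerSeries.coeff (R := A) m (PowerSeries.coeff d ((1 - PowerSeries.C X * X) * g₂)) := by
  have expand : ∀ g : PowerSeries (PowerSeries A),
      PowerSeries.coeff (R := A) m (PowerSeries.coeff d ((1 - PowerSeries.C X * X) * g)) =
      PowerSeries.coeff (R := A) m (PowerSeries.coeff d g) -
        PowerSeries.coeff (R := A) m (X * PowerSeries.coeff d (X * g)) := by
    intro g
    rw [sub_mul, one_mul, mul_assoc, map_sub, map_sub, PowerSeries.coeff_C_mul]
  rw [expand, expand, h1]
  congr 1
  cases d with
  | zero => simp [PowerSeries.coeff_zero_X_mul]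
  | succ d' =>
    rw [PowerSeries.coeff_succ_X_mul, PowerSeries.coeff_succ_X_mul]
    cases m with
    | zero => simp [PowerSeries.coeff_zero_X_mul]
    | succ m' =>
      rw [PowerSeries.coeff_succ_X_mul, PowerSeries.coeff_succ_X_mul]
      simpa using h2


noncomputable instance instTopK (p e : ℕ) [Fact p.Prime] : TopologicalSpace (GaloisField p e) := ⊥
noncomputable instance instTopR (p e : ℕ) [Fact p.Prime] : TopologicalSpace (PowerSeries (GaloisField p e)) :=
  Pi.topologicalSpace
noncomputable instance instTopRR (p e : ℕ) [Fact p.Prime] :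
    TopologicalSpace (PowerSeries (PowerSeries (GaloisField p e))) := Pi.topologicalSpace
instance instDiscK (p e : ℕ) [Fact p.Prime] : DiscreteTopology (GaloisField p e) := ⟨rfl⟩
instance instT2R (p e : ℕ) [Fact p.Prime] : T2Space (PowerSeries (GaloisField p e)) :=
  Pi.t2Space
instance instT2RR (p e : ℕ) [Fact p.Prime] :
    T2Space (PowerSeries (PowerSeries (GaloisField p e))) := Pi.t2Space

theorem stmt_11_aux {p e q : ℕ} [Fact p.Prime] (hq : q = p ^ e) (he : 0 < e)
    (σ : PowerSeries (PowerSeries (GaloisField p e)) →+*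
        PowerSeries (PowerSeries (GaloisField p e)))
    (hcont : Continuous σ)
    (hC : σ (PowerSeries.C (R := PowerSeries (GaloisField p e)) PowerSeries.X) =
        PowerSeries.C (R := PowerSeries (GaloisField p e)) (PowerSeries.X ^ q))
    (hX : σ PowerSeries.X = PowerSeries.X) :
    Multipliable (fun i : ℕ =>
          1 - PowerSeries.C (R := PowerSeries (GaloisField p e)) (PowerSeries.X ^ q ^ i) *
            PowerSeries.X) ∧
        (∏' i : ℕ, (1 - PowerSeries.C (R := PowerSeries (GaloisField p e)) (PowerSeries.X ^ q ^ i) *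
            PowerSeries.X)) =
          (1 - PowerSeries.C (R := PowerSeries (GaloisField p e)) PowerSeries.X * PowerSeries.X) *
            σ (∏' i : ℕ, (1 - PowerSeries.C (R := PowerSeries (GaloisField p e))
                (PowerSeries.X ^ q ^ i) * PowerSeries.X)) := by
  set K := GaloisField p e with hK
  haveI : DiscreteTopology K := ⟨rfl⟩
  have q2 : 2 ≤ q := by
    rw [hq]
    exact Nat.one_lt_pow he.ne' (Fact.out (p := p.Prime)).two_le
  set f : ℕ → PowerSeries (PowerSeries K) :=
    fun i => 1 - PowerSeries.C (X ^ q ^ i) * X with hf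
  set P : PowerSeries (PowerSeries K) :=
    PowerSeries.mk fun d => PowerSeries.mk fun m =>
      PowerSeries.coeff (R := K) m (PowerSeries.coeff d (∏ i ∈ Finset.range (m + 1), f i)) with hP'
  -- stability
  have hstab : ∀ d m (F : Finset ℕ), Finset.range (m + 1) ⊆ F →
      PowerSeries.coeff (R := K) m (PowerSeries.coeff d (∏ i ∈ F, f i)) =
      PowerSeries.coeff (R := K) m (PowerSeries.coeff d P) := by
    intro d m F hsub
    rw [hP', PowerSeries.coeff_mk, PowerSeries.coeff_mk, hf]
    rw [aux_stable q q2, Finset.inter_eq_right.mpr hsub]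
  -- application = coefficient
  have e1 : ∀ g : PowerSeries (PowerSeries K), ∀ x y : Unit →₀ ℕ,
      g x y = PowerSeries.coeff (R := K) (y ()) (PowerSeries.coeff (x ()) g) := by
    intro g x y
    rw [← aux_coeff_apply g x, ← aux_coeff_apply]
  have hP : HasProd f P := by
    rw [HasProd, SummationFilter.unconditional_filter]
    refine tendsto_pi_nhds.mpr ?_
    intro x
    refine tendsto_pi_nhds.mpr ?_
    intro y
    apply tendsto_nhds_of_eventually_eq
    filter_upwards [Filter.eventually_ge_atTop (Finset.range (y () + 1))] with F hF
    rw [e1 (∏ b ∈ F, f b) x y, e1 P x y]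
    exact hstab (x ()) (y ()) F hF
  have htp : (∏' i, f i) = P := hP.tprod_eq
  refine ⟨⟨P, hP⟩, ?_⟩
  rw [htp]
  -- σ sends f i to f (i+1)
  have hσf : ∀ i, σ (f i) = f (i + 1) := by
    intro i
    rw [hf]
    simp only
    rw [map_sub, map_one, map_mul, hX, map_pow, map_pow, hC, ← map_pow, ← pow_mul, ← pow_succ']
  -- convergence of partial products under σ
  have hσPN : Filter.Tendsto (fun N => σ (∏ i ∈ Finset.range N, f i))
      Filter.atTop (nhds (σ P)) := (hcont.tendsto P).comp hP.tendsto_prod_nat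
  have hev : ∀ d' m', ∀ᶠ N in Filter.atTop,
      PowerSeries.coeff (R := K) m' (PowerSeries.coeff d' (σ (∏ i ∈ Finset.range N, f i))) =
      PowerSeries.coeff (R := K) m' (PowerSeries.coeff d' (σ P)) := by
    intro d' m'
    have h1 := tendsto_pi_nhds.mp hσPN (Finsupp.single () d')
    have h2 := tendsto_pi_nhds.mp h1 (Finsupp.single () m')
    have h3 := h2 ((isOpen_discrete {σ P (Finsupp.single () d') (Finsupp.single () m')}).mem_nhds
      (Set.mem_singleton _))
    filter_upwards [h3] with N hN
    have hN' : σ (∏ i ∈ Finset.range N, f i) (Finsupp.single () d') (Finsupp.single () m') =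
        σ P (Finsupp.single () d') (Finsupp.single () m') := hN
    have hgoal := (e1 (σ (∏ i ∈ Finset.range N, f i)) (Finsupp.single () d')
      (Finsupp.single () m')).symm.trans
      (hN'.trans (e1 (σ P) (Finsupp.single () d') (Finsupp.single () m')))
    simpa [Finsupp.single_eq_same] using hgoal
  apply PowerSeries.ext
  intro d
  apply PowerSeries.ext
  intro m
  obtain ⟨N, h1, h2, hNm⟩ :=
    ((hev d m).and ((hev (d - 1) (m - 1)).and (Filter.eventually_ge_atTop m))).exists
  have key : (1 - PowerSeries.C (R := PowerSeries K) X * X) * σ (∏ i ∈ Finset.range N, f i) =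
      ∏ i ∈ Finset.range (N + 1), f i := by
    rw [map_prod]
    have : ∀ i ∈ Finset.range N, σ (f i) = f (i + 1) := fun i _ => hσf i
    rw [Finset.prod_congr rfl this, Finset.prod_range_succ' f N, mul_comm]
    congr 1
    rw [hf]
    simp
  calc PowerSeries.coeff (R := K) m (PowerSeries.coeff d P)
      = PowerSeries.coeff (R := K) m (PowerSeries.coeff d (∏ i ∈ Finset.range (N + 1), f i)) :=
        (hstab d m (Finset.range (N + 1)) (Finset.range_subset_range.mpr (by omega))).symm
    _ = PowerSeries.coeff (R := K) m (PowerSeries.coeff d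
        ((1 - PowerSeries.C (R := PowerSeries K) X * X) * σ (∏ i ∈ Finset.range N, f i))) := by
        rw [key]
    _ = PowerSeries.coeff (R := K) m (PowerSeries.coeff d
        ((1 - PowerSeries.C (R := PowerSeries K) X * X) * σ P)) := aux_f0 d m _ _ h1 h2



/-- Let `q = p^e` be a prime power and equip `𝔽_q[[ζ]][[w]]` with its
coefficientwise topology. The family `(1 − ζ^{q^i}·w)_{i ≥ 0}` is multipliable; denoting its
product by `P` and by `P^σ` its image under a continuous ring endomorphism `σ` of
`𝔽_q[[ζ]][[w]]` sending `ζ` to `ζ^q` and fixing `w`, one has `P = (1 − ζw)·P^σ`. -/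
theorem stmt_11 {p e q : ℕ} [Fact p.Prime] (hq : q = p ^ e) (he : 0 < e) :
    letI : TopologicalSpace (GaloisField p e) := ⊥
    letI : TopologicalSpace (PowerSeries (GaloisField p e)) := Pi.topologicalSpace
    letI : TopologicalSpace (PowerSeries (PowerSeries (GaloisField p e))) := Pi.topologicalSpace
    ∀ σ : PowerSeries (PowerSeries (GaloisField p e)) →+*
        PowerSeries (PowerSeries (GaloisField p e)),
      Continuous σ →
      σ (PowerSeries.C (R := PowerSeries (GaloisField p e)) PowerSeries.X) =
        PowerSeries.C (R := PowerSeries (GaloisField p e)) (PowerSeries.X ^ q) →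
      σ PowerSeries.X = PowerSeries.X →
      Multipliable (fun i : ℕ =>
          1 - PowerSeries.C (R := PowerSeries (GaloisField p e)) (PowerSeries.X ^ q ^ i) *
            PowerSeries.X) ∧
        (∏' i : ℕ, (1 - PowerSeries.C (R := PowerSeries (GaloisField p e)) (PowerSeries.X ^ q ^ i) *
            PowerSeries.X)) =
          (1 - PowerSeries.C (R := PowerSeries (GaloisField p e)) PowerSeries.X * PowerSeries.X) *
            σ (∏' i : ℕ, (1 - PowerSeries.C (R := PowerSeries (GaloisField p e))
                (PowerSeries.X ^ q ^ i) * PowerSeries.X)) := by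
  intro σ hcont hC hX
  exact stmt_11_aux hq he σ hcont hC hX
end

section
/- Let q = p^e be a prime power and K = 𝔽_q(ζ) the field of rational functions over 𝔽_q. Define e₀ = 1, e_n = ∏_{i=0}^{n-1}(ζ^{q^n} − ζ^{q^i})⁻¹ and c₀ = 1, c_n = ∏_{i=1}^{n}(ζ − ζ^{q^i})⁻¹ in K. Then the formal power series E = ∑_{n≥0} e_n X^{q^n} and L = ∑_{n≥0} c_n X^{q^n} in K[[X]] (both with zero constant term and linear coefficient 1) are compositional inverses of each other: substituting L into E gives X, and substituting E into L gives X. -/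
/-- Composition (substitution) of formal power series: `(psComp f g) = f ∘ g`, defined
coefficientwise; it agrees with substituting `g` into `f` whenever `g` has zero constant term
(in that case `coeff m (g^n) = 0` for `n > m`, so the truncated sum is the full one). -/
noncomputable def psComp {K : Type*} [CommRing K] (f g : PowerSeries K) : PowerSeries K :=
  PowerSeries.mk fun m => ∑ n ∈ Finset.range (m + 1),
    PowerSeries.coeff n f * PowerSeries.coeff m (g ^ n)

/-- `e_n = ∏_{i=0}^{n-1} (ζ^{q^n} − ζ^{q^i})⁻¹ ∈ K = 𝔽_q(ζ)` (so `e₀ = 1`), `ζ = RatFunc.X`. -/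
noncomputable def carlitzExpCoeff (p e : ℕ) [Fact p.Prime] (q n : ℕ) :
    RatFunc (GaloisField p e) :=
  ∏ i ∈ Finset.range n,
    ((RatFunc.X : RatFunc (GaloisField p e)) ^ q ^ n - RatFunc.X ^ q ^ i)⁻¹

/-- `c_n = ∏_{i=1}^{n} (ζ − ζ^{q^i})⁻¹ ∈ K = 𝔽_q(ζ)` (so `c₀ = 1`), `ζ = RatFunc.X`. -/
noncomputable def carlitzLogCoeff (p e : ℕ) [Fact p.Prime] (q n : ℕ) :
    RatFunc (GaloisField p e) :=
  ∏ i ∈ Finset.Icc 1 n,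
    ((RatFunc.X : RatFunc (GaloisField p e)) - RatFunc.X ^ q ^ i)⁻¹

open scoped Classical in
/-- The Carlitz exponential `E = ∑_{n≥0} e_n X^{q^n}` as a formal power series over `𝔽_q(ζ)`. -/
noncomputable def carlitzExp (p e : ℕ) [Fact p.Prime] (q : ℕ) :
    PowerSeries (RatFunc (GaloisField p e)) :=
  PowerSeries.mk fun m =>
    if h : ∃ n, m = q ^ n then carlitzExpCoeff p e q h.choose else 0

open scoped Classical in
/-- The Carlitz logarithm `L = ∑_{n≥0} c_n X^{q^n}` as a formal power series over `𝔽_q(ζ)`. -/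
noncomputable def carlitzLog (p e : ℕ) [Fact p.Prime] (q : ℕ) :
    PowerSeries (RatFunc (GaloisField p e)) :=
  PowerSeries.mk fun m =>
    if h : ∃ n, m = q ^ n then carlitzLogCoeff p e q h.choose else 0

section Frob
open PowerSeries
variable {K : Type*} [CommRing K] {p : ℕ} [Fact p.Prime] [CharP K p]

theorem coeff_pow_char (f : PowerSeries K) (m : ℕ) :
    PowerSeries.coeff m (f ^ p) =
      if p ∣ m then (PowerSeries.coeff (m / p) f) ^ p else 0 := by
  have hp : p.Prime := Fact.out
  haveI : ExpChar K p := .prime hp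
  set t : Polynomial K := trunc (m + 1) f with ht
  have h1 : PowerSeries.coeff m (f ^ p) = PowerSeries.coeff m ((t : PowerSeries K) ^ p) := by
    obtain ⟨u, hu⟩ := sub_dvd_pow_sub_pow f (t : PowerSeries K) p
    have h2 : PowerSeries.coeff m (f ^ p - (t : PowerSeries K) ^ p) = 0 := by
      rw [hu, PowerSeries.coeff_mul]
      refine Finset.sum_eq_zero fun ij hij => ?_
      have hle : ij.1 ≤ m := Finset.HasAntidiagonal.antidiagonal.fst_le hij
      have : PowerSeries.coeff ij.1 (f - (t : PowerSeries K)) = 0 := by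
        rw [map_sub, Polynomial.coeff_coe, ht, coeff_trunc,
          if_pos (Nat.lt_succ_of_le hle), sub_self]
      rw [this, zero_mul]
    rw [map_sub, sub_eq_zero] at h2
    exact h2
  rw [h1, ← Polynomial.coe_pow, Polynomial.coeff_coe, ← Polynomial.map_frobenius_expand (p := p) t,
    Polynomial.coeff_map, Polynomial.coeff_expand hp.pos]
  split_ifs with h
  · have : t.coeff (m / p) = PowerSeries.coeff (m / p) f := by
      rw [ht, coeff_trunc, if_pos (Nat.lt_succ_of_le (Nat.div_le_self m p))]
    rw [this]; rfl
  · exact map_zero _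

theorem coeff_pow_char_pow (f : PowerSeries K) (s m : ℕ) :
    PowerSeries.coeff m (f ^ p ^ s) =
      if p ^ s ∣ m then (PowerSeries.coeff (m / p ^ s) f) ^ p ^ s else 0 := by
  induction s generalizing f m with
  | zero => simp
  | succ s ih =>
    have hp : p.Prime := Fact.out
    have : f ^ p ^ (s + 1) = (f ^ p) ^ p ^ s := by
      rw [← pow_mul, pow_succ, mul_comm]
    rw [this, ih, coeff_pow_char]
    by_cases h1 : p ^ s ∣ m
    · rw [if_pos h1]
      by_cases h2 : p ∣ m / p ^ s
      · have hd : p ^ (s + 1) ∣ m := by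
          rw [pow_succ]
          exact Nat.mul_dvd_of_dvd_div h1 h2
        rw [if_pos h2, if_pos hd, ← pow_mul, ← pow_succ', Nat.div_div_eq_div_mul, ← pow_succ]
      · have hnd : ¬ p ^ (s + 1) ∣ m := by
          intro hd
          exact h2 ((Nat.dvd_div_iff_mul_dvd h1).2 (by rwa [← pow_succ]))
        rw [if_neg h2, if_neg hnd, zero_pow (pow_ne_zero s hp.pos.ne')]
    · have hnd : ¬ p ^ (s + 1) ∣ m := fun hd => h1 (dvd_trans (pow_dvd_pow p (Nat.le_succ s)) hd)
      rw [if_neg h1, if_neg hnd]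

end Frob

section Core

variable (p e q : ℕ) [Fact p.Prime]

local notation "K'" => RatFunc (GaloisField p e)
local notation "θ" => (RatFunc.X : RatFunc (GaloisField p e))

theorem charP_K : CharP K' p :=
  charP_of_injective_ringHom (RatFunc.algebraMap_injective (GaloisField p e)) p

theorem Xpow_sub_ne {a b : ℕ} (h : a ≠ b) : (θ : K') ^ a - θ ^ b ≠ 0 := by
  rw [sub_ne_zero]
  intro hab
  apply h
  have h2 : (Polynomial.X : Polynomial (GaloisField p e)) ^ a = Polynomial.X ^ b := by
    apply RatFunc.algebraMap_injective (GaloisField p e)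
    rw [map_pow, map_pow, RatFunc.algebraMap_X, hab]
  simpa using congrArg Polynomial.natDegree h2

theorem two_le_q (hq : q = p ^ e) (he : 0 < e) : 2 ≤ q := by
  have hp : p.Prime := Fact.out
  subst hq
  exact Nat.one_lt_pow he.ne' hp.two_le

theorem frob_sub (hq : q = p ^ e) (x y : K') (j : ℕ) :
    (x - y) ^ q ^ j = x ^ q ^ j - y ^ q ^ j := by
  haveI := charP_K p e
  subst hq
  rw [← pow_mul p e j]
  exact sub_pow_char_pow x y (e * j)

theorem sum_pow_q (hq : q = p ^ e) {ι : Type*} (s : Finset ι) (f : ι → K') :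
    (∑ i ∈ s, f i) ^ q = ∑ i ∈ s, f i ^ q := by
  haveI := charP_K p e
  haveI : ExpChar K' p := .prime Fact.out
  subst hq
  exact sum_pow_char_pow p e s f

theorem ce_zero : carlitzExpCoeff p e q 0 = 1 := by simp [carlitzExpCoeff]

theorem cl_zero : carlitzLogCoeff p e q 0 = 1 := by simp [carlitzLogCoeff]

theorem rec_e (hq : q = p ^ e) (he : 0 < e) (j : ℕ) :
    carlitzExpCoeff p e q (j + 1) * (θ ^ q ^ (j + 1) - θ) =
      carlitzExpCoeff p e q j ^ q := by
  have h2q := two_le_q p e q hq he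
  have hfrob := frob_sub p e q hq
  unfold carlitzExpCoeff
  rw [← Finset.prod_pow, Finset.prod_range_succ' (fun i => ((θ:K') ^ q ^ (j+1) - θ ^ q ^ i)⁻¹) j]
  have h0 : ((θ:K') ^ q ^ (j+1) - θ ^ q ^ 0)⁻¹ = (θ ^ q ^ (j+1) - θ)⁻¹ := by
    rw [pow_zero, pow_one]
  rw [h0, mul_assoc, inv_mul_cancel₀ (by
    have := Xpow_sub_ne p e (a := q ^ (j+1)) (b := 1) (by
      have : 2 ≤ q ^ (j+1) := le_trans h2q (Nat.le_self_pow (Nat.succ_ne_zero j) q)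
      omega)
    simpa using this), mul_one]
  refine Finset.prod_congr rfl fun i _ => ?_
  rw [inv_pow]
  have hb : ((θ:K') ^ q ^ j - θ ^ q ^ i) ^ q = θ ^ q ^ (j+1) - θ ^ q ^ (i+1) := by
    have h1 := hfrob (θ ^ q ^ j) (θ ^ q ^ i) 1
    rw [pow_one] at h1
    rw [h1, ← pow_mul, ← pow_mul, ← pow_succ, ← pow_succ]
  rw [hb]

theorem rec_c (hq : q = p ^ e) (he : 0 < e) (j : ℕ) :
    carlitzLogCoeff p e q (j + 1) * (θ - θ ^ q ^ (j + 1)) =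
      carlitzLogCoeff p e q j := by
  have h2q := two_le_q p e q hq he
  unfold carlitzLogCoeff
  rw [Finset.prod_Icc_succ_top (Nat.le_add_left 1 j), mul_assoc, inv_mul_cancel₀, mul_one]
  have := Xpow_sub_ne p e (a := 1) (b := q ^ (j+1)) (by
    have : 2 ≤ q ^ (j+1) := le_trans h2q (Nat.le_self_pow (Nat.succ_ne_zero j) q)
    omega)
  simpa using this

/-- powered c-recurrence -/
theorem rec_c_pow (hq : q = p ^ e) (he : 0 < e) (k j : ℕ) (hj : j ≤ k) :
    carlitzLogCoeff p e q (k + 1 - j) ^ q ^ j * (θ ^ q ^ j - θ ^ q ^ (k + 1)) =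
      carlitzLogCoeff p e q (k - j) ^ q ^ j := by
  have h1 := rec_c p e q hq he (k - j)
  have h2 := congrArg (· ^ q ^ j) h1
  simp only [mul_pow] at h2
  rw [frob_sub p e q hq] at h2
  rw [← pow_mul, ← pow_add] at h2
  have h3 : k - j + 1 + j = k + 1 := by omega
  have h4 : k - j + 1 = k + 1 - j := by omega
  rwa [h3, h4] at h2

/-- powered e-recurrence -/
theorem rec_e_pow (hq : q = p ^ e) (he : 0 < e) (k j : ℕ) (hj : j ≤ k) :
    carlitzExpCoeff p e q (k + 1 - j) ^ q ^ j * (θ ^ q ^ (k + 1) - θ ^ q ^ j) =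
      carlitzExpCoeff p e q (k - j) ^ q ^ (j + 1) := by
  have h1 := rec_e p e q hq he (k - j)
  have h2 := congrArg (· ^ q ^ j) h1
  simp only [mul_pow] at h2
  rw [frob_sub p e q hq] at h2
  rw [← pow_mul, ← pow_add] at h2
  rw [← pow_mul, ← pow_succ'] at h2
  have h3 : k - j + 1 + j = k + 1 := by omega
  have h4 : k - j + 1 = k + 1 - j := by omega
  rwa [h3, h4] at h2

end Core

noncomputable def aSum (p e : ℕ) [Fact p.Prime] (q k : ℕ) : RatFunc (GaloisField p e) :=
  ∑ j ∈ Finset.range (k + 1),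
    carlitzExpCoeff p e q j * carlitzLogCoeff p e q (k - j) ^ q ^ j

noncomputable def bSum (p e : ℕ) [Fact p.Prime] (q k : ℕ) : RatFunc (GaloisField p e) :=
  ∑ j ∈ Finset.range (k + 1),
    carlitzLogCoeff p e q j * carlitzExpCoeff p e q (k - j) ^ q ^ j

section Key

variable (p e q : ℕ) [Fact p.Prime]

local notation "θ" => (RatFunc.X : RatFunc (GaloisField p e))

theorem key_a (hq : q = p ^ e) (he : 0 < e) (k : ℕ) :
    aSum p e q (k + 1) * (θ ^ q ^ (k + 1) - θ) = aSum p e q k ^ q - aSum p e q k := by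
  have hA1 : aSum p e q (k + 1) * θ ^ q ^ (k + 1) + aSum p e q k =
      ∑ j ∈ Finset.range (k + 2),
        carlitzExpCoeff p e q j * carlitzLogCoeff p e q (k + 1 - j) ^ q ^ j * θ ^ q ^ j := by
    have hak : aSum p e q k = ∑ j ∈ Finset.range (k + 1),
        carlitzExpCoeff p e q j *
          (carlitzLogCoeff p e q (k + 1 - j) ^ q ^ j * (θ ^ q ^ j - θ ^ q ^ (k + 1))) := by
      unfold aSum
      refine Finset.sum_congr rfl fun j hj => ?_
      rw [rec_c_pow p e q hq he k j (Finset.mem_range_succ_iff.mp hj)]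
    rw [hak]
    unfold aSum
    rw [Finset.sum_mul, Finset.sum_range_succ]
    conv_rhs => rw [Finset.sum_range_succ]
    rw [add_right_comm]
    congr 1
    rw [← Finset.sum_add_distrib]
    exact Finset.sum_congr rfl fun j _ => by ring
  have hA2 : θ * aSum p e q (k + 1) + aSum p e q k ^ q =
      ∑ j ∈ Finset.range (k + 2),
        carlitzExpCoeff p e q j * carlitzLogCoeff p e q (k + 1 - j) ^ q ^ j * θ ^ q ^ j := by
    have haq : aSum p e q k ^ q = ∑ j ∈ Finset.range (k + 1),
        carlitzExpCoeff p e q (j + 1) * (θ ^ q ^ (j + 1) - θ) *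
          carlitzLogCoeff p e q (k - j) ^ q ^ (j + 1) := by
      unfold aSum
      rw [sum_pow_q p e q hq]
      refine Finset.sum_congr rfl fun j hj => ?_
      rw [mul_pow, ← pow_mul, ← pow_succ, ← rec_e p e q hq he j]
    rw [haq]
    unfold aSum
    rw [Finset.mul_sum, Finset.sum_range_succ']
    conv_rhs => rw [Finset.sum_range_succ']
    simp only [Nat.succ_sub_succ_eq_sub, Nat.sub_zero, pow_zero, pow_one]
    rw [add_right_comm]
    congr 1
    · rw [← Finset.sum_add_distrib]
      exact Finset.sum_congr rfl fun j _ => by ring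
    · ring
  linear_combination hA1 - hA2

theorem key_b (hq : q = p ^ e) (he : 0 < e) (k : ℕ) :
    bSum p e q (k + 1) * (θ ^ q ^ (k + 1) - θ) = 0 := by
  have hB1 : bSum p e q (k + 1) * θ ^ q ^ (k + 1) =
      (∑ j ∈ Finset.range (k + 2),
        carlitzLogCoeff p e q j * carlitzExpCoeff p e q (k + 1 - j) ^ q ^ j * θ ^ q ^ j) +
      ∑ j ∈ Finset.range (k + 1),
        carlitzLogCoeff p e q j * carlitzExpCoeff p e q (k - j) ^ q ^ (j + 1) := by
    unfold bSum
    rw [Finset.sum_mul, Finset.sum_range_succ]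
    conv_rhs => rw [Finset.sum_range_succ]
    rw [add_right_comm]
    congr 1
    rw [← Finset.sum_add_distrib]
    refine Finset.sum_congr rfl fun j hj => ?_
    have hE := rec_e_pow p e q hq he k j (Finset.mem_range_succ_iff.mp hj)
    linear_combination carlitzLogCoeff p e q j * hE
  have hB2 : bSum p e q (k + 1) * θ =
      (∑ j ∈ Finset.range (k + 2),
        carlitzLogCoeff p e q j * carlitzExpCoeff p e q (k + 1 - j) ^ q ^ j * θ ^ q ^ j) +
      ∑ j ∈ Finset.range (k + 1),
        carlitzLogCoeff p e q j * carlitzExpCoeff p e q (k - j) ^ q ^ (j + 1) := by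
    unfold bSum
    rw [Finset.sum_mul, Finset.sum_range_succ']
    conv_rhs => rw [Finset.sum_range_succ' (fun j => carlitzLogCoeff p e q j *
      carlitzExpCoeff p e q (k + 1 - j) ^ q ^ j * θ ^ q ^ j) (k + 1)]
    simp only [Nat.succ_sub_succ_eq_sub, Nat.sub_zero, pow_zero, pow_one]
    rw [add_right_comm]
    congr 1
    rw [← Finset.sum_add_distrib]
    refine Finset.sum_congr rfl fun j hj => ?_
    have hC := rec_c p e q hq he j
    linear_combination carlitzExpCoeff p e q (k - j) ^ q ^ (j + 1) * hC
  linear_combination hB1 - hB2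

theorem aSum_zero : aSum p e q 0 = 1 := by
  simp [aSum, ce_zero, cl_zero]

theorem bSum_zero : bSum p e q 0 = 1 := by
  simp [bSum, ce_zero, cl_zero]

theorem pow_sub_X_ne (hq : q = p ^ e) (he : 0 < e) (k : ℕ) :
    (θ ^ q ^ (k + 1) - θ) ≠ 0 := by
  have h2q := two_le_q p e q hq he
  have := Xpow_sub_ne p e (a := q ^ (k + 1)) (b := 1) (by
    have : 2 ≤ q ^ (k + 1) := le_trans h2q (Nat.le_self_pow (Nat.succ_ne_zero k) q)
    omega)
  simpa using this

theorem aSum_succ (hq : q = p ^ e) (he : 0 < e) (k : ℕ) : aSum p e q (k + 1) = 0 := by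
  induction k with
  | zero =>
    have h := key_a p e q hq he 0
    rw [aSum_zero, one_pow, sub_self] at h
    exact (mul_eq_zero.mp h).resolve_right (pow_sub_X_ne p e q hq he 0)
  | succ k ih =>
    have h := key_a p e q hq he (k + 1)
    rw [ih, zero_pow (two_le_q p e q hq he |> fun h2 => by omega), sub_zero] at h
    exact (mul_eq_zero.mp h).resolve_right (pow_sub_X_ne p e q hq he (k + 1))

theorem bSum_succ (hq : q = p ^ e) (he : 0 < e) (k : ℕ) : bSum p e q (k + 1) = 0 := by
  have h := key_b p e q hq he k
  exact (mul_eq_zero.mp h).resolve_right (pow_sub_X_ne p e q hq he k)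

end Key

section PS

variable (p e q : ℕ) [Fact p.Prime]

local notation "K'" => RatFunc (GaloisField p e)

open scoped Classical in
theorem coeff_mk_qpow (h2q : 2 ≤ q) (c : ℕ → K') (k : ℕ) :
    PowerSeries.coeff (q ^ k)
      (PowerSeries.mk fun m => if h : ∃ n, m = q ^ n then c h.choose else 0) = c k := by
  rw [PowerSeries.coeff_mk]
  have hex : ∃ n, q ^ k = q ^ n := ⟨k, rfl⟩
  rw [dif_pos hex]
  congr 1
  exact (Nat.pow_right_injective h2q hex.choose_spec).symm

open scoped Classical in
theorem coeff_mk_not (c : ℕ → K') (m : ℕ) (hm : ¬∃ n, m = q ^ n) :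
    PowerSeries.coeff m
      (PowerSeries.mk fun m => if h : ∃ n, m = q ^ n then c h.choose else 0) = 0 := by
  rw [PowerSeries.coeff_mk, dif_neg hm]

theorem coeff_pow_q (hq : q = p ^ e) (f : PowerSeries K') (j m : ℕ) :
    PowerSeries.coeff m (f ^ q ^ j) =
      if q ^ j ∣ m then PowerSeries.coeff (m / q ^ j) f ^ q ^ j else 0 := by
  haveI := charP_K p e
  have h : q ^ j = p ^ (e * j) := by rw [hq, ← pow_mul]
  rw [h]
  exact coeff_pow_char_pow f (e * j) m

theorem comp_eq_X (h2q : 2 ≤ q) (F G : PowerSeries K') (cF cG : ℕ → K')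
    (hFq : ∀ k, PowerSeries.coeff (q ^ k) F = cF k)
    (hF0 : ∀ m, (¬∃ k, m = q ^ k) → PowerSeries.coeff m F = 0)
    (hGq : ∀ k, PowerSeries.coeff (q ^ k) G = cG k)
    (hG0 : ∀ m, (¬∃ k, m = q ^ k) → PowerSeries.coeff m G = 0)
    (hGpow : ∀ j m, PowerSeries.coeff m (G ^ q ^ j) =
      if q ^ j ∣ m then PowerSeries.coeff (m / q ^ j) G ^ q ^ j else 0)
    (hsum : ∀ k, (∑ j ∈ Finset.range (k + 1), cF j * cG (k - j) ^ q ^ j) =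
      if k = 0 then 1 else 0) :
    psComp F G = PowerSeries.X := by
  have hq0 : 0 < q := by omega
  ext m
  rw [psComp, PowerSeries.coeff_mk, PowerSeries.coeff_X]
  by_cases hm : ∃ k, m = q ^ k
  · obtain ⟨k, rfl⟩ := hm
    have hs : (∑ n ∈ Finset.range (q ^ k + 1),
          PowerSeries.coeff n F * PowerSeries.coeff (q ^ k) (G ^ n)) =
        ∑ j ∈ Finset.range (k + 1), cF j * cG (k - j) ^ q ^ j := by
      have hsub : (Finset.range (k + 1)).image (q ^ ·) ⊆ Finset.range (q ^ k + 1) := by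
        intro n hn
        obtain ⟨j, hj, rfl⟩ := Finset.mem_image.mp hn
        have : q ^ j ≤ q ^ k :=
          Nat.pow_le_pow_right hq0 (Finset.mem_range_succ_iff.mp hj)
        exact Finset.mem_range.mpr (by omega)
      have hvan : ∀ n ∈ Finset.range (q ^ k + 1),
          n ∉ (Finset.range (k + 1)).image (q ^ ·) →
          PowerSeries.coeff n F * PowerSeries.coeff (q ^ k) (G ^ n) = 0 := by
        intro n hn hni
        have : ¬∃ j, n = q ^ j := by
          rintro ⟨j, rfl⟩
          apply hni
          refine Finset.mem_image.mpr ⟨j, Finset.mem_range_succ_iff.mpr ?_, rfl⟩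
          have hle : q ^ j ≤ q ^ k := by
            have := Finset.mem_range.mp hn; omega
          exact (Nat.pow_le_pow_iff_right h2q).mp hle
        rw [hF0 n this, zero_mul]
      rw [← Finset.sum_subset hsub hvan, Finset.sum_image
        (fun x _ y _ hxy => Nat.pow_right_injective h2q hxy)]
      refine Finset.sum_congr rfl fun j hj => ?_
      have hjk : j ≤ k := Finset.mem_range_succ_iff.mp hj
      rw [hFq, hGpow, if_pos (pow_dvd_pow q hjk), Nat.pow_div hjk hq0, hGq]
    rw [hs, hsum k]
    by_cases hk : k = 0
    · subst hk; simp
    · have h1 : q ^ k ≠ 1 := by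
        have := Nat.one_lt_pow hk h2q
        omega
      rw [if_neg hk, if_neg h1]
  · have hm1 : m ≠ 1 := fun h => hm ⟨0, by simp [h]⟩
    rw [if_neg hm1]
    refine Finset.sum_eq_zero fun n _ => ?_
    by_cases hn2 : ∃ j, n = q ^ j
    · obtain ⟨j, rfl⟩ := hn2
      rw [hGpow]
      split_ifs with hd
      · have hnq : ¬∃ k', m / q ^ j = q ^ k' := by
          rintro ⟨k', hk'⟩
          exact hm ⟨j + k', by rw [pow_add, ← hk', Nat.mul_div_cancel' hd]⟩
        rw [hG0 _ hnq, zero_pow (by positivity : 0 < q ^ j).ne', mul_zero]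
      · rw [mul_zero]
    · rw [hF0 n hn2, zero_mul]

end PS



/-- Over `K = 𝔽_q(ζ)`, the Carlitz exponential `E = ∑ e_n X^{q^n}` and the
Carlitz logarithm `L = ∑ c_n X^{q^n}` are compositional inverses of each other:
substituting `L` into `E` gives `X`, and substituting `E` into `L` gives `X`. -/
theorem stmt_13 {p e q : ℕ} [Fact p.Prime] (hq : q = p ^ e) (he : 0 < e) :
    psComp (carlitzExp p e q) (carlitzLog p e q) =
        (PowerSeries.X : PowerSeries (RatFunc (GaloisField p e))) ∧
      psComp (carlitzLog p e q) (carlitzExp p e q) =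
        (PowerSeries.X : PowerSeries (RatFunc (GaloisField p e))) := by
  have h2q := two_le_q p e q hq he
  constructor
  · refine comp_eq_X p e q h2q _ _ (carlitzExpCoeff p e q) (carlitzLogCoeff p e q)
      (coeff_mk_qpow p e q h2q _) (coeff_mk_not p e q _)
      (coeff_mk_qpow p e q h2q _) (coeff_mk_not p e q _)
      (coeff_pow_q p e q hq _) ?_
    intro k
    cases k with
    | zero => rw [if_pos rfl, ← aSum_zero p e q]; rfl
    | succ k => rw [if_neg (Nat.succ_ne_zero k), ← aSum_succ p e q hq he k]; rfl
  · refine comp_eq_X p e q h2q _ _ (carlitzLogCoeff p e q) (carlitzExpCoeff p e q)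
      (coeff_mk_qpow p e q h2q _) (coeff_mk_not p e q _)
      (coeff_mk_qpow p e q h2q _) (coeff_mk_not p e q _)
      (coeff_pow_q p e q hq _) ?_
    intro k
    cases k with
    | zero => rw [if_pos rfl, ← bSum_zero p e q]; rfl
    | succ k => rw [if_neg (Nat.succ_ne_zero k), ← bSum_succ p e q hq he k]; rfl
end
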